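/- arXiv:2212.09706 — 8 statements merged into one kernel-verified Lean document; each statement's English description precedes it below -/
import Mathlib

section
/- If the random vector (P_1,...,P_K) of standard uniform random variables is weakly negatively dependent, then for every α ∈ (0,1), the probability that the Simes statistic S_K(P) = min_{k=1..K} (K/k)·P_{(k)} is at most α is bounded by α + Σ_{k=2}^{K} C(K,k)·(αk/K)^k, where P_{(k)} denotes the k-th order statistic. -/
open MeasureTheory


/-- The Simes function applied to the values `p i`, `i ∈ A`:
`min over k of (|A|/k) · (k-th smallest value)`. -/
noncomputable def simesOn {ι : Type*} (A : Finset ι) (p : ι → ℝ) : ℝ :=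
  if h : A.Nonempty then
    ((Finset.range A.card).image fun j =>
      (A.card : ℝ) / (j + 1) * ((A.val.map p).sort (· ≤ ·)).getD j 0).min'
      ((Finset.nonempty_range_iff.mpr (Finset.card_ne_zero.mpr h)).image _)
  else 0

lemma simes_exists {K : ℕ} (hK : 0 < K) (p : Fin K → ℝ) {α : ℝ} (hα : 0 < α)
    (h : simesOn Finset.univ p ≤ α) :
    ∃ j ∈ Finset.range K, ∃ A : Finset (Fin K), A.card = j + 1 ∧
      ∀ i ∈ A, p i ≤ α * (j + 1) / K := by
  classical
  have hne : (Finset.univ : Finset (Fin K)).Nonempty := by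
    rw [Finset.univ_nonempty_iff]
    exact Fin.pos_iff_nonempty.mp hK
  rw [simesOn, dif_pos hne] at h
  set S := ((Finset.univ : Finset (Fin K)).val.map p) with hS
  set l := S.sort (· ≤ ·) with hl
  have hcard : (Finset.univ : Finset (Fin K)).card = K := by simp
  have hlen : l.length = K := by
    rw [hl, Multiset.length_sort, hS, Multiset.card_map]; simp
  have hex : ∃ b ∈ (Finset.range (Finset.univ : Finset (Fin K)).card).image
      (fun j => ((Finset.univ : Finset (Fin K)).card : ℝ) / (j + 1) * l.getD j 0), b ≤ α :=
    ⟨_, Finset.min'_mem _ _, h⟩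
  obtain ⟨b, hbm, hble⟩ := hex
  obtain ⟨j, hjm, hje⟩ := Finset.mem_image.mp hbm
  rw [hcard] at hjm
  refine ⟨j, hjm, ?_⟩
  have hjK : j < K := Finset.mem_range.mp hjm
  have hval : (K : ℝ) / (j + 1) * l.getD j 0 ≤ α := by
    rw [hcard] at hje; rw [hje]; exact hble
  have hjpos : (0 : ℝ) < (j : ℝ) + 1 := by positivity
  have hKpos : (0 : ℝ) < (K : ℝ) := by exact_mod_cast hK
  set x := α * (j + 1) / K with hx
  have hgetd : l.getD j 0 ≤ x := by
    rw [hx]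
    rw [div_mul_eq_mul_div, div_le_iff₀ hjpos] at hval
    rw [le_div_iff₀ hKpos]
    linarith [hval]
  -- first j+1 entries of l are ≤ x
  have hjl : j < l.length := hlen ▸ hjK
  have hget : l.getD j 0 = l.get ⟨j, hjl⟩ := List.getD_eq_getElem l 0 hjl
  have hsorted : List.Pairwise (· ≤ ·) l := Multiset.pairwise_sort _ _
  have htake : ∀ a ∈ l.take (j+1), a ≤ x := by
    intro a ha
    obtain ⟨i, hi, hia⟩ := List.mem_take_iff_getElem.mp ha
    have hij : i ≤ j := by omega
    have : l.get ⟨i, by omega⟩ ≤ l.get ⟨j, hjl⟩ :=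
      hsorted.rel_get_of_le (by exact hij)
    calc a = l.get ⟨i, by omega⟩ := by simp [← hia]
    _ ≤ l.get ⟨j, hjl⟩ := this
    _ ≤ x := by rw [← hget]; exact hgetd
  -- multiset argument
  have hsub : (↑(l.take (j+1)) : Multiset ℝ) ≤ S := by
    rw [← Multiset.sort_eq S (· ≤ ·), ← hl]
    exact (List.take_sublist _ _).subperm
  have hfil : (↑(l.take (j+1)) : Multiset ℝ) ≤ S.filter (· ≤ x) :=
    Multiset.le_filter.mpr ⟨hsub, by simpa using htake⟩
  have hcard2 : j + 1 ≤ Multiset.card (S.filter (· ≤ x)) := by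
    have := Multiset.card_le_card hfil
    simpa [List.length_take, hlen, Nat.succ_le_of_lt hjK] using this
  have hfm : S.filter (· ≤ x) = Multiset.map p (Finset.univ.val.filter (fun i => p i ≤ x)) := by
    rw [hS, Multiset.filter_map]
    rfl
  have hcard3 : j + 1 ≤ (Finset.univ.filter (fun i => p i ≤ x)).card := by
    rw [hfm, Multiset.card_map] at hcard2
    exact hcard2
  obtain ⟨A, hA, hAcard⟩ := Finset.exists_subset_card_eq hcard3
  exact ⟨A, hAcard, fun i hi => (Finset.mem_filter.mp (hA hi)).2⟩

/-- If standard uniform p-values `P₁,…,P_K` are weakly negatively dependent, then for every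
`α ∈ (0,1)`, `P(S_K(P) ≤ α) ≤ α + ∑_{k=2}^K C(K,k) (αk/K)^k`. -/
theorem simes_wnd_additive_bound {Ω : Type*} [MeasurableSpace Ω] (μ : Measure Ω)
    [IsProbabilityMeasure μ] (K : ℕ) (hK : 0 < K) (P : Fin K → Ω → ℝ)
    (hunif : ∀ k, ∀ x ∈ Set.Icc (0 : ℝ) 1, μ {ω | P k ω ≤ x} = ENNReal.ofReal x)
    (hwnd : ∀ (A : Finset (Fin K)) (x : ℝ),
      μ (⋂ k ∈ A, {ω | P k ω ≤ x}) ≤ ∏ k ∈ A, μ {ω | P k ω ≤ x})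
    (α : ℝ) (hα : α ∈ Set.Ioo (0 : ℝ) 1) :
    μ {ω | simesOn Finset.univ (fun k => P k ω) ≤ α} ≤
      ENNReal.ofReal (α + ∑ k ∈ Finset.Icc 2 K, (K.choose k : ℝ) * (α * k / K) ^ k) := by
  classical
  obtain ⟨hα0, hα1⟩ := hα
  set x : ℕ → ℝ := fun j => α * (j + 1) / K with hxdef
  have hKR : (0:ℝ) < K := by exact_mod_cast hK
  have hx01 : ∀ j < K, x j ∈ Set.Icc (0:ℝ) 1 := by
    intro j hj
    constructor
    · positivity
    · rw [div_le_one hKR]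
      have h1 : (j:ℝ) + 1 ≤ K := by exact_mod_cast hj
      nlinarith
  -- the covering
  have hcov : {ω | simesOn Finset.univ (fun k => P k ω) ≤ α} ⊆
      ⋃ j ∈ Finset.range K, ⋃ A ∈ Finset.powersetCard (j+1) (Finset.univ : Finset (Fin K)),
        ⋂ i ∈ A, {ω | P i ω ≤ x j} := by
    intro ω hω
    obtain ⟨j, hjm, A, hAcard, hA⟩ := simes_exists hK (fun k => P k ω) hα0 hω
    simp only [Set.mem_iUnion]
    refine ⟨j, hjm, A, ?_, ?_⟩
    · simp [Finset.mem_powersetCard, hAcard]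
    · simp only [Set.mem_iInter]
      intro i hi
      exact hA i hi
  calc μ {ω | simesOn Finset.univ (fun k => P k ω) ≤ α}
      ≤ μ (⋃ j ∈ Finset.range K, ⋃ A ∈ Finset.powersetCard (j+1) (Finset.univ : Finset (Fin K)),
        ⋂ i ∈ A, {ω | P i ω ≤ x j}) := measure_mono hcov
    _ ≤ ∑ j ∈ Finset.range K, μ (⋃ A ∈ Finset.powersetCard (j+1) (Finset.univ : Finset (Fin K)),
        ⋂ i ∈ A, {ω | P i ω ≤ x j}) := measure_biUnion_finset_le _ _
    _ ≤ ∑ j ∈ Finset.range K, ∑ A ∈ Finset.powersetCard (j+1) (Finset.univ : Finset (Fin K)),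
        μ (⋂ i ∈ A, {ω | P i ω ≤ x j}) :=
        Finset.sum_le_sum fun j _ => measure_biUnion_finset_le _ _
    _ ≤ ∑ j ∈ Finset.range K, ∑ A ∈ Finset.powersetCard (j+1) (Finset.univ : Finset (Fin K)),
        ENNReal.ofReal ((x j) ^ (j+1)) := by
        refine Finset.sum_le_sum fun j hj => Finset.sum_le_sum fun A hA => ?_
        have hjK : j < K := Finset.mem_range.mp hj
        have hAc : A.card = j + 1 := (Finset.mem_powersetCard.mp hA).2
        calc μ (⋂ i ∈ A, {ω | P i ω ≤ x j}) ≤ ∏ i ∈ A, μ {ω | P i ω ≤ x j} := hwnd A (x j)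
          _ = ENNReal.ofReal ((x j) ^ (j+1)) := by
              rw [ENNReal.ofReal_pow (hx01 j hjK).1, ← hAc]
              rw [Finset.prod_congr rfl (fun i _ => hunif i (x j) (hx01 j hjK))]
              simp [Finset.prod_const]
    _ = ∑ j ∈ Finset.range K, (K.choose (j+1) : ENNReal) * ENNReal.ofReal ((x j) ^ (j+1)) := by
        refine Finset.sum_congr rfl fun j _ => ?_
        rw [Finset.sum_const, Finset.card_powersetCard, Finset.card_univ, Fintype.card_fin,
          nsmul_eq_mul]
    _ = ENNReal.ofReal (∑ j ∈ Finset.range K, (K.choose (j+1) : ℝ) * (x j) ^ (j+1)) := by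
        rw [ENNReal.ofReal_sum_of_nonneg]
        · refine Finset.sum_congr rfl fun j hj => ?_
          have hjK : j < K := Finset.mem_range.mp hj
          rw [ENNReal.ofReal_mul (by positivity)]
          congr 1
          simp [ENNReal.ofReal_natCast]
        · intro j hj
          have hjK : j < K := Finset.mem_range.mp hj
          have := (hx01 j hjK).1
          positivity
    _ = ENNReal.ofReal (α + ∑ k ∈ Finset.Icc 2 K, (K.choose k : ℝ) * (α * k / K) ^ k) := by
        congr 1
        have hre : ∑ k ∈ Finset.Icc 1 K, (K.choose k : ℝ) * (α * k / K) ^ k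
            = ∑ j ∈ Finset.range K, (K.choose (j+1) : ℝ) * (x j) ^ (j+1) := by
          rw [show Finset.Icc 1 K = Finset.Ico 1 (K+1) from (Finset.Ico_add_one_right_eq_Icc 1 K).symm,
            Finset.sum_Ico_eq_sum_range]
          simp only [Nat.add_sub_cancel]
          refine Finset.sum_congr rfl fun j _ => ?_
          rw [hxdef, Nat.add_comm 1 j]
          push_cast
          ring_nf
        rw [← hre]
        have hsplit : Finset.Icc 1 K = insert 1 (Finset.Icc 2 K) := by
          ext k; simp [Finset.mem_Icc, Finset.mem_insert]; omega
        rw [hsplit, Finset.sum_insert (by simp)]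
        congr 1
        rw [Nat.choose_one_right]
        push_cast
        field_simp
end

section
/- For all α ∈ (0, 1/e), the sum Σ_{k=1}^{K} C(K,k)·(αk/K)^k is at most α + 2α² + (9/2)α³ + (1/√(8π))·(eα)⁴/(1 − eα), for any positive integer K. -/
open Finset Real

lemma sqrt_pi_le_stirlingSeq (n : ℕ) : Real.sqrt Real.pi ≤ Stirling.stirlingSeq (n + 1) := by
  have ht : Filter.Tendsto (Stirling.stirlingSeq ∘ Nat.succ) Filter.atTop
      (nhds (Real.sqrt Real.pi)) :=
    Stirling.tendsto_stirlingSeq_sqrt_pi.comp (Filter.tendsto_add_atTop_nat 1)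
  exact Stirling.stirlingSeq'_antitone.le_of_tendsto ht n

lemma factorial_stirling_lb (k : ℕ) (hk : 1 ≤ k) :
    Real.sqrt (2 * Real.pi * k) * (k / Real.exp 1) ^ k ≤ (Nat.factorial k : ℝ) := by
  obtain ⟨n, rfl⟩ := Nat.exists_eq_succ_of_ne_zero (by omega : k ≠ 0)
  have h := sqrt_pi_le_stirlingSeq n
  rw [Stirling.stirlingSeq] at h
  have hpos : (0:ℝ) < Real.sqrt (2 * (n + 1 : ℕ)) * ((n + 1 : ℕ) / Real.exp 1) ^ (n + 1) := by
    have : (0:ℝ) < (n + 1 : ℕ) := by positivity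
    positivity
  rw [le_div_iff₀ hpos] at h
  calc Real.sqrt (2 * Real.pi * (n + 1 : ℕ)) * ((n + 1 : ℕ) / Real.exp 1) ^ (n + 1)
      = Real.sqrt Real.pi *
        (Real.sqrt (2 * (n + 1 : ℕ)) * ((n + 1 : ℕ) / Real.exp 1) ^ (n + 1)) := by
        rw [show 2 * Real.pi * ((n + 1 : ℕ) : ℝ) = Real.pi * (2 * (n + 1 : ℕ)) by ring,
          Real.sqrt_mul Real.pi_pos.le]
        ring
    _ ≤ ((n + 1).factorial : ℝ) := h

/-- For all `α ∈ (0, 1/e)` and positive integer `K`,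
`∑_{k=1}^K C(K,k) (α k / K)^k ≤ α + 2α² + (9/2)α³ + (1/√(8π))(eα)⁴/(1-eα)`. -/
theorem simes_sum_bound (K : ℕ) (hK : 0 < K) (α : ℝ) (h0 : 0 < α)
    (h1 : α < 1 / Real.exp 1) :
    ∑ k ∈ Finset.Icc 1 K, (K.choose k : ℝ) * (α * k / K) ^ k ≤
      α + 2 * α ^ 2 + 9 / 2 * α ^ 3 +
        1 / Real.sqrt (8 * Real.pi) * (Real.exp 1 * α) ^ 4 / (1 - Real.exp 1 * α) := by
  have hKpos : (0:ℝ) < K := by exact_mod_cast hK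
  set x : ℝ := Real.exp 1 * α with hxdef
  have hx0 : 0 < x := by positivity
  have hx1 : x < 1 := by
    have := (lt_div_iff₀' (Real.exp_pos 1)).mp h1
    simpa [hxdef] using this
  -- general term bound
  have hterm : ∀ k ∈ Finset.Icc 1 K,
      (K.choose k : ℝ) * (α * k / K) ^ k ≤ (α * k) ^ k / (Nat.factorial k : ℝ) := by
    intro k hk
    have hkfac : (0:ℝ) < (Nat.factorial k : ℝ) := by exact_mod_cast k.factorial_pos
    have hchoose : (K.choose k : ℝ) * (Nat.factorial k : ℝ) ≤ (K:ℝ) ^ k := by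
      have := Nat.descFactorial_le_pow K k
      rw [Nat.descFactorial_eq_factorial_mul_choose] at this
      have : (Nat.factorial k : ℝ) * (K.choose k : ℝ) ≤ (K:ℝ) ^ k := by exact_mod_cast this
      linarith [this]
    have hc : (K.choose k : ℝ) ≤ (K:ℝ) ^ k / (Nat.factorial k : ℝ) :=
      (le_div_iff₀ hkfac).mpr hchoose
    have hKk : ((K:ℝ)) ^ k ≠ 0 := by positivity
    calc (K.choose k : ℝ) * (α * k / K) ^ k
        ≤ ((K:ℝ) ^ k / (Nat.factorial k : ℝ)) * (α * k / K) ^ k := by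
          apply mul_le_mul_of_nonneg_right hc (by positivity)
      _ = (α * k) ^ k / (Nat.factorial k : ℝ) := by
          rw [div_pow]; field_simp
  -- tail term bound for k ≥ 4
  have htail : ∀ k : ℕ, 4 ≤ k →
      (α * k) ^ k / (Nat.factorial k : ℝ) ≤ x ^ k / Real.sqrt (8 * Real.pi) := by
    intro k hk4
    have hk1 : 1 ≤ k := le_trans (by norm_num) hk4
    have hkpos : (0:ℝ) < k := by exact_mod_cast hk1
    have hkfac : (0:ℝ) < (Nat.factorial k : ℝ) := by exact_mod_cast k.factorial_pos
    have hfac := factorial_stirling_lb k hk1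
    have hsq : Real.sqrt (8 * Real.pi) ≤ Real.sqrt (2 * Real.pi * k) := by
      apply Real.sqrt_le_sqrt
      have : (4:ℝ) ≤ k := by exact_mod_cast hk4
      nlinarith [Real.pi_pos]
    have hlb : Real.sqrt (8 * Real.pi) * (k / Real.exp 1) ^ k ≤ (Nat.factorial k : ℝ) :=
      le_trans (mul_le_mul_of_nonneg_right hsq (by positivity)) hfac
    have hsqpos : (0:ℝ) < Real.sqrt (8 * Real.pi) := by positivity
    have haux : x ^ k * ((k:ℝ) / Real.exp 1) ^ k = (α * k) ^ k := by
      rw [← mul_pow]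
      congr 1
      rw [hxdef]
      field_simp
    have hne : x ^ k / Real.sqrt (8 * Real.pi) *
        (Real.sqrt (8 * Real.pi) * ((k:ℝ) / Real.exp 1) ^ k) = (α * k) ^ k := by
      rw [← haux]; field_simp
    rw [← hne, div_le_iff₀ hkfac]
    calc x ^ k / Real.sqrt (8 * Real.pi) * (Real.sqrt (8 * Real.pi) * ((k:ℝ) / Real.exp 1) ^ k)
        ≤ x ^ k / Real.sqrt (8 * Real.pi) * (Nat.factorial k : ℝ) :=
          mul_le_mul_of_nonneg_left hlb (by positivity)
      _ = x ^ k / Real.sqrt (8 * Real.pi) * (Nat.factorial k : ℝ) := rfl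
  -- split the sum
  set m := min K 3 with hm
  have hsplit : Finset.Icc 1 K = Finset.Icc 1 m ∪ Finset.Ioc m K := by
    ext a
    simp only [hm, Finset.mem_union, Finset.mem_Icc, Finset.mem_Ioc]
    omega
  have hdisj : Disjoint (Finset.Icc 1 m) (Finset.Ioc m K) := by
    simp only [Finset.disjoint_left, Finset.mem_Icc, Finset.mem_Ioc]
    rintro a ⟨_, h2⟩ ⟨h3, _⟩; omega
  rw [hsplit, Finset.sum_union hdisj]
  -- head bound
  have hhead : ∑ k ∈ Finset.Icc 1 m, (K.choose k : ℝ) * (α * k / K) ^ k ≤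
      α + 2 * α ^ 2 + 9 / 2 * α ^ 3 := by
    have h1' : ∑ k ∈ Finset.Icc 1 m, (K.choose k : ℝ) * (α * k / K) ^ k ≤
        ∑ k ∈ Finset.Icc 1 m, (α * k) ^ k / (Nat.factorial k : ℝ) := by
      apply Finset.sum_le_sum
      intro k hk
      apply hterm
      simp only [Finset.mem_Icc] at hk ⊢
      exact ⟨hk.1, le_trans hk.2 (min_le_left _ _)⟩
    refine h1'.trans ?_
    have h2' : ∑ k ∈ Finset.Icc 1 m, (α * k) ^ k / (Nat.factorial k : ℝ) ≤
        ∑ k ∈ Finset.Icc 1 3, (α * k) ^ k / (Nat.factorial k : ℝ) := by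
      apply Finset.sum_le_sum_of_subset_of_nonneg
      · exact Finset.Icc_subset_Icc_right (min_le_right _ _)
      · intro k _ _; positivity
    refine h2'.trans ?_
    rw [show Finset.Icc 1 3 = {1, 2, 3} by rfl]
    rw [Finset.sum_insert (by norm_num), Finset.sum_insert (by norm_num), Finset.sum_singleton]
    norm_num [Nat.factorial]
    ring_nf
    nlinarith [sq_nonneg α]
  -- tail bound
  have htailsum : ∑ k ∈ Finset.Ioc m K, (K.choose k : ℝ) * (α * k / K) ^ k ≤
      1 / Real.sqrt (8 * Real.pi) * x ^ 4 / (1 - x) := by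
    have hb : ∑ k ∈ Finset.Ioc m K, (K.choose k : ℝ) * (α * k / K) ^ k ≤
        ∑ k ∈ Finset.Ioc m K, x ^ k / Real.sqrt (8 * Real.pi) := by
      apply Finset.sum_le_sum
      intro k hk
      simp only [Finset.mem_Ioc] at hk
      have hk4 : 4 ≤ k := by
        have h3 : m = 3 := by
          rcases le_or_gt 3 K with h | h
          · simp [hm, min_eq_right h]
          · exfalso
            have h2 := hk.2
            have h1 := hk.1
            simp only [hm] at h1
            omega
        omega
      exact le_trans (hterm k (Finset.mem_Icc.mpr ⟨by omega, hk.2⟩)) (htail k hk4)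
    refine hb.trans ?_
    have hgeom : ∑ k ∈ Finset.Ioc m K, x ^ k ≤ x ^ 4 / (1 - x) := by
      rcases le_or_gt K 3 with h | h
      · have : Finset.Ioc m K = ∅ := by
          simp [hm, min_eq_left h]
        rw [this, Finset.sum_empty]
        apply div_nonneg (by positivity) (by linarith)
      · have hm3 : m = 3 := by simp [hm, min_eq_right (by omega : 3 ≤ K)]
        rw [hm3]
        have hset : Finset.Ioc 3 K = Finset.Ico 4 (K + 1) := by
          ext a; simp [Nat.lt_succ_iff]; omega
        rw [hset, Finset.sum_Ico_eq_sum_range]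
        have heq : ∀ j ∈ Finset.range (K + 1 - 4), x ^ (4 + j) = x ^ 4 * x ^ j := by
          intro j _; rw [pow_add]
        rw [Finset.sum_congr rfl heq, ← Finset.mul_sum, div_eq_mul_one_div]
        apply mul_le_mul_of_nonneg_left _ (by positivity)
        have hts : ∑ i ∈ Finset.range (K + 1 - 4), x ^ i ≤ ∑' i : ℕ, x ^ i :=
          Summable.sum_le_tsum _ (fun i _ => by positivity)
            (summable_geometric_of_lt_one hx0.le hx1)
        rw [tsum_geometric_of_lt_one hx0.le hx1] at hts
        rw [one_div]
        exact hts
    calc ∑ k ∈ Finset.Ioc m K, x ^ k / Real.sqrt (8 * Real.pi)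
        = (∑ k ∈ Finset.Ioc m K, x ^ k) / Real.sqrt (8 * Real.pi) := by
          rw [Finset.sum_div]
      _ ≤ (x ^ 4 / (1 - x)) / Real.sqrt (8 * Real.pi) := by
          apply div_le_div_of_nonneg_right hgeom (by positivity)
      _ = 1 / Real.sqrt (8 * Real.pi) * x ^ 4 / (1 - x) := by ring
  linarith
end

section
/- If the random vector (P_1,...,P_K) of standard uniform random variables is weakly negatively dependent, then P(S_K(P) ≤ α) ≤ 1.26·α for all α ∈ (0, 0.1], where S_K is the Simes function. -/
open MeasureTheory


lemma count_ge_of_sorted_getD {K : ℕ} (p : Fin K → ℝ) (j : ℕ) (hj : j < K) (x : ℝ)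
    (h : ((Finset.univ.val.map p).sort (· ≤ ·)).getD j 0 ≤ x) :
    j + 1 ≤ (Finset.univ.filter (fun k => p k ≤ x)).card := by
  classical
  set m : Multiset ℝ := Finset.univ.val.map p with hm
  set l : List ℝ := m.sort (· ≤ ·) with hl
  have hlen : l.length = K := by
    simp [hl, hm, Multiset.length_sort]
  have hjl : j < l.length := hlen ▸ hj
  have hsort : l.Pairwise (· ≤ ·) := Multiset.pairwise_sort _ _
  have hx : l[j] ≤ x := by
    have : l.getD j 0 = l[j] := List.getD_eq_getElem l 0 hjl
    rw [← this]; exact h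
  have htake : ∀ a ∈ l.take (j + 1), a ≤ x := by
    intro a ha
    obtain ⟨i, hi, rfl⟩ := List.mem_iff_getElem.mp ha
    have hlt : i < l.length := by
      have : (l.take (j+1)).length = min (j+1) l.length := List.length_take
      omega
    have hij : i ≤ j := by
      have : (l.take (j+1)).length = min (j+1) l.length := List.length_take
      omega
    have he : (l.take (j+1))[i] = l[i] := List.getElem_take
    rw [he]
    calc l[i] ≤ l[j] := by
          rcases eq_or_lt_of_le hij with h' | h'
          · subst h'; exact le_rfl
          · exact List.pairwise_iff_getElem.mp hsort i j hlt hjl h'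
      _ ≤ x := hx
  have hcount : j + 1 ≤ l.countP (fun a => decide (a ≤ x)) := by
    have h1 : (l.take (j+1)).countP (fun a => decide (a ≤ x)) ≤ l.countP (fun a => decide (a ≤ x)) :=
      (List.take_sublist _ _).countP_le
    have h2 : (l.take (j+1)).countP (fun a => decide (a ≤ x)) = (l.take (j+1)).length := by
      rw [List.countP_eq_length]
      intro a ha; simpa using htake a ha
    have h3 : (l.take (j+1)).length = j + 1 := by
      rw [List.length_take]; omega
    omega
  have hcm : (Finset.univ.filter (fun k => p k ≤ x)).card = m.countP (fun a => a ≤ x) := by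
    rw [hm, Multiset.countP_map]
    rfl
  have : m.countP (fun a => a ≤ x) = l.countP (fun a => decide (a ≤ x)) := by
    conv_lhs => rw [← Multiset.sort_eq (s := m) (r := (· ≤ ·))]
    rfl
  omega


lemma geom_sum_le_inv_one_sub {r : ℝ} (h0 : 0 ≤ r) (h1 : r < 1) (n : ℕ) :
    ∑ i ∈ Finset.range n, r ^ i ≤ 1 / (1 - r) := by
  have h2 : 0 < 1 - r := by linarith
  rw [le_div_iff₀ h2]
  have h3 := geom_sum_mul r n
  have h4 : (0:ℝ) ≤ r ^ n := by positivity
  nlinarith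

lemma pow_div_factorial_le_exp (j : ℕ) :
    ((j + 1 : ℝ)) ^ (j + 1) / (Nat.factorial (j + 1) : ℝ) ≤ Real.exp 1 ^ j := by
  induction j with
  | zero => simp [Nat.factorial]
  | succ j ih =>
    have hj1 : (0:ℝ) < (j + 1 : ℝ) := by positivity
    have hrat : ((j + 2 : ℝ) / (j + 1)) ^ (j + 1) ≤ Real.exp 1 := by
      have h1 : (j + 2 : ℝ) / (j + 1) = 1 + 1 / (j + 1) := by field_simp; ring
      have h2 : (1 : ℝ) + 1 / (j + 1) ≤ Real.exp (1 / (j + 1)) := by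
        have := Real.add_one_le_exp (1 / (j + 1 : ℝ))
        linarith
      have h3 : ((1:ℝ) + 1 / (j + 1)) ^ (j+1) ≤ Real.exp (1 / (j + 1)) ^ (j+1) := by
        apply pow_le_pow_left₀ (by positivity) h2
      rw [h1]
      calc ((1:ℝ) + 1 / (j + 1)) ^ (j+1) ≤ Real.exp (1 / (j + 1)) ^ (j+1) := h3
        _ = Real.exp ((j+1) * (1 / (j + 1))) := by rw [← Real.exp_nat_mul]; norm_num
        _ = Real.exp 1 := by rw [mul_one_div, div_self (ne_of_gt hj1)]
    have hfne : (Nat.factorial (j + 1) : ℝ) ≠ 0 := by positivity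
    have key : ((j + 1 + 1 : ℝ)) ^ (j + 1 + 1) / (Nat.factorial (j + 1 + 1) : ℝ) =
        ((j + 2 : ℝ) / (j + 1)) ^ (j + 1) * (((j + 1 : ℝ)) ^ (j + 1) / (Nat.factorial (j + 1) : ℝ)) := by
      rw [Nat.factorial_succ (j+1)]
      push_cast
      rw [div_pow]
      field_simp
      ring
    have goal_eq : ((j + 1 : ℕ) + 1 : ℝ) ^ (j + 1 + 1) = ((j:ℝ) + 1 + 1) ^ (j + 1 + 1) := by push_cast; ring
    rw [goal_eq, key]
    calc ((j + 2 : ℝ) / (j + 1)) ^ (j + 1) * (((j + 1 : ℝ)) ^ (j + 1) / (Nat.factorial (j + 1) : ℝ))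
        ≤ Real.exp 1 * Real.exp 1 ^ j := by
          apply mul_le_mul hrat ih (by positivity) (Real.exp_pos 1).le
      _ = Real.exp 1 ^ (j + 1) := by ring

lemma series_bound (n : ℕ) :
    ∑ j ∈ Finset.range n, ((j + 1 : ℝ)) ^ (j + 1) / (Nat.factorial (j + 1) : ℝ) * (1/10) ^ j
      ≤ 1.26 := by
  set t : ℕ → ℝ := fun j => ((j + 1 : ℝ)) ^ (j + 1) / (Nat.factorial (j + 1) : ℝ) * (1/10) ^ j
    with ht
  have htnn : ∀ j, 0 ≤ t j := by intro j; positivity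
  have hS6 : ∑ j ∈ Finset.range 6, t j ≤ 1.2589189 := by
    simp [ht, Finset.sum_range_succ, Nat.factorial]
    norm_num
  have hgeom : ∀ j, t j ≤ (0.272 : ℝ) ^ j := by
    intro j
    have h1 : t j ≤ Real.exp 1 ^ j * (1/10) ^ j := by
      have := pow_div_factorial_le_exp j
      have h2 : (0:ℝ) ≤ (1/10:ℝ)^j := by positivity
      exact mul_le_mul_of_nonneg_right this h2
    have h3 : Real.exp 1 ^ j * (1/10:ℝ) ^ j = (Real.exp 1 / 10) ^ j := by
      rw [← mul_pow]
      congr 1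
      ring
    have h4 : (Real.exp 1 / 10) ^ j ≤ (0.272:ℝ) ^ j := by
      apply pow_le_pow_left₀ (by positivity)
      have := Real.exp_one_lt_d9
      norm_num
      linarith
    calc t j ≤ Real.exp 1 ^ j * (1/10) ^ j := h1
      _ = (Real.exp 1 / 10) ^ j := h3
      _ ≤ (0.272:ℝ) ^ j := h4
  rcases le_or_gt n 6 with h | h
  · calc ∑ j ∈ Finset.range n, t j ≤ ∑ j ∈ Finset.range 6, t j := by
          apply Finset.sum_le_sum_of_subset_of_nonneg (Finset.range_subset_range.mpr h)
          intro i _ _; exact htnn i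
      _ ≤ 1.2589189 := hS6
      _ ≤ 1.26 := by norm_num
  · have hsplit : ∑ j ∈ Finset.range 6, t j + ∑ j ∈ Finset.Ico 6 n, t j
        = ∑ j ∈ Finset.range n, t j := by
      rw [Finset.range_eq_Ico, Finset.range_eq_Ico]
      exact Finset.sum_Ico_consecutive t (Nat.zero_le 6) h.le
    have htail : ∑ j ∈ Finset.Ico 6 n, t j ≤ (0.272:ℝ)^6 * (1/(1-0.272)) := by
      calc ∑ j ∈ Finset.Ico 6 n, t j ≤ ∑ j ∈ Finset.Ico 6 n, (0.272:ℝ) ^ j :=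
            Finset.sum_le_sum fun j _ => hgeom j
        _ = ∑ i ∈ Finset.range (n - 6), (0.272:ℝ) ^ (6 + i) := by
            rw [Finset.sum_Ico_eq_sum_range]
        _ = (0.272:ℝ)^6 * ∑ i ∈ Finset.range (n - 6), (0.272:ℝ) ^ i := by
            rw [Finset.mul_sum]
            congr 1; ext i; rw [pow_add]
        _ ≤ (0.272:ℝ)^6 * (1/(1-0.272)) := by
            apply mul_le_mul_of_nonneg_left (geom_sum_le_inv_one_sub (by norm_num) (by norm_num) _)
            positivity
    calc ∑ j ∈ Finset.range n, t j
        = ∑ j ∈ Finset.range 6, t j + ∑ j ∈ Finset.Ico 6 n, t j := hsplit.symm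
      _ ≤ 1.2589189 + (0.272:ℝ)^6 * (1/(1-0.272)) := add_le_add hS6 htail
      _ ≤ 1.26 := by norm_num

lemma real_sum_bound (K : ℕ) (hK : 0 < K) (α : ℝ) (h0 : 0 < α) (h1 : α ≤ 0.1) :
    ∑ j ∈ Finset.range K, (K.choose (j+1) : ℝ) * ((j+1) * α / K) ^ (j+1) ≤ 1.26 * α := by
  have hK0 : (0:ℝ) < K := by exact_mod_cast hK
  have hterm : ∀ j ∈ Finset.range K,
      (K.choose (j+1):ℝ) * ((j+1) * α / K) ^ (j+1)
        ≤ (((j+1:ℝ)) ^ (j+1) / (Nat.factorial (j+1) : ℝ) * (1/10) ^ j) * α := by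
    intro j hj
    have hfacpos : (0:ℝ) < (Nat.factorial (j+1) : ℝ) := by
      exact_mod_cast Nat.factorial_pos (j+1)
    have hfac : (Nat.factorial (j+1) : ℝ) * (K.choose (j+1) : ℝ) ≤ (K:ℝ) ^ (j+1) := by
      have h := Nat.descFactorial_le_pow K (j+1)
      have h2 : Nat.factorial (j+1) * K.choose (j+1) = K.descFactorial (j+1) :=
        (Nat.descFactorial_eq_factorial_mul_choose K (j+1)).symm
      exact_mod_cast h2 ▸ h
    have step1 : (K.choose (j+1) : ℝ) / (K:ℝ) ^ (j+1) ≤ 1 / (Nat.factorial (j+1) : ℝ) := by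
      rw [div_le_div_iff₀ (by positivity) hfacpos]
      linarith [hfac]
    have hα : α ^ (j+1) ≤ α * (1/10) ^ j := by
      have he : α ^ (j+1) = α * α ^ j := by ring
      rw [he]
      apply mul_le_mul_of_nonneg_left _ h0.le
      exact pow_le_pow_left₀ h0.le (by norm_num; linarith) j
    have lhs_eq : (K.choose (j+1):ℝ) * ((j+1) * α / K) ^ (j+1)
        = ((K.choose (j+1):ℝ) / (K:ℝ) ^ (j+1)) * (((j+1:ℝ)) ^ (j+1) * α ^ (j+1)) := by
      rw [div_pow, mul_pow]; ring
    have rhs_eq : (((j+1:ℝ)) ^ (j+1) / (Nat.factorial (j+1) : ℝ) * (1/10) ^ j) * α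
        = (1 / (Nat.factorial (j+1) : ℝ)) * (((j+1:ℝ)) ^ (j+1) * (α * (1/10) ^ j)) := by
      ring
    rw [lhs_eq, rhs_eq]
    apply mul_le_mul step1 _ (by positivity) (by positivity)
    apply mul_le_mul_of_nonneg_left hα (by positivity)
  calc ∑ j ∈ Finset.range K, (K.choose (j+1) : ℝ) * ((j+1) * α / K) ^ (j+1)
      ≤ ∑ j ∈ Finset.range K, (((j+1:ℝ)) ^ (j+1) / (Nat.factorial (j+1) : ℝ) * (1/10) ^ j) * α :=
        Finset.sum_le_sum hterm
    _ = (∑ j ∈ Finset.range K, ((j+1:ℝ)) ^ (j+1) / (Nat.factorial (j+1) : ℝ) * (1/10) ^ j) * α := by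
        rw [Finset.sum_mul]
    _ ≤ 1.26 * α := by
        apply mul_le_mul_of_nonneg_right (series_bound K) h0.le

/-- If standard uniform p-values `P₁,…,P_K` are weakly negatively dependent, then
`P(S_K(P) ≤ α) ≤ 1.26 α` for all `α ∈ (0, 0.1]`. -/
theorem simes_wnd_mult_bound_small {Ω : Type*} [MeasurableSpace Ω] (μ : Measure Ω)
    [IsProbabilityMeasure μ] (K : ℕ) (hK : 0 < K) (P : Fin K → Ω → ℝ)
    (hunif : ∀ k, ∀ x ∈ Set.Icc (0 : ℝ) 1, μ {ω | P k ω ≤ x} = ENNReal.ofReal x)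
    (hwnd : ∀ (A : Finset (Fin K)) (x : ℝ),
      μ (⋂ k ∈ A, {ω | P k ω ≤ x}) ≤ ∏ k ∈ A, μ {ω | P k ω ≤ x})
    (α : ℝ) (h0 : 0 < α) (h1 : α ≤ 0.1) :
    μ {ω | simesOn Finset.univ (fun k => P k ω) ≤ α} ≤ ENNReal.ofReal (1.26 * α) := by
  classical
  haveI : Nonempty (Fin K) := ⟨⟨0, hK⟩⟩
  have hK0 : (0:ℝ) < K := by exact_mod_cast hK
  set x : ℕ → ℝ := fun j => (j+1) * α / K with hxdef
  have hx01 : ∀ j ∈ Finset.range K, x j ∈ Set.Icc (0:ℝ) 1 := by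
    intro j hj
    have hjK : j < K := Finset.mem_range.mp hj
    constructor
    · positivity
    · have h2 : ((j:ℝ)+1) ≤ K := by exact_mod_cast hjK
      rw [div_le_one hK0]
      nlinarith
  have hcard : (Finset.univ : Finset (Fin K)).card = K := by simp
  have hsub : {ω | simesOn Finset.univ (fun k => P k ω) ≤ α} ⊆
      ⋃ j ∈ Finset.range K, ⋃ A ∈ Finset.powersetCard (j+1) (Finset.univ : Finset (Fin K)),
        ⋂ k ∈ A, {ω | P k ω ≤ x j} := by
    intro ω hω
    simp only [Set.mem_setOf_eq, simesOn] at hω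
    rw [dif_pos Finset.univ_nonempty] at hω
    set S := (Finset.range (Finset.univ : Finset (Fin K)).card).image
        (fun j => ((Finset.univ : Finset (Fin K)).card : ℝ) / (j + 1) *
          ((Finset.univ.val.map (fun k => P k ω)).sort (· ≤ ·)).getD j 0) with hSdef
    have hne : S.Nonempty := by
      apply Finset.Nonempty.image
      rw [Finset.nonempty_range_iff, hcard]
      omega
    have hle : S.min' hne ≤ α := hω
    obtain ⟨j, hjmem, hjeq⟩ := Finset.mem_image.mp (S.min'_mem hne)
    rw [← hjeq] at hle
    rw [hcard] at hjmem hle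
    replace hω := hle
    have hjK : j < K := Finset.mem_range.mp hjmem
    have hgd : ((Finset.univ.val.map (fun k => P k ω)).sort (· ≤ ·)).getD j 0 ≤ x j := by
      have hj1 : (0:ℝ) < (j:ℝ) + 1 := by positivity
      rw [div_mul_eq_mul_div, div_le_iff₀ hj1] at hω
      rw [hxdef]
      rw [le_div_iff₀ hK0]
      nlinarith [hω]
    have hcount := count_ge_of_sorted_getD (fun k => P k ω) j hjK (x j) hgd
    obtain ⟨A, hAsub, hAcard⟩ := Finset.exists_subset_card_eq hcount
    refine Set.mem_iUnion₂.mpr ⟨j, hjmem, Set.mem_iUnion₂.mpr ⟨A, ?_, ?_⟩⟩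
    · exact Finset.mem_powersetCard.mpr ⟨Finset.subset_univ A, hAcard⟩
    · exact Set.mem_iInter₂.mpr fun k hk => (Finset.mem_filter.mp (hAsub hk)).2
  have hofReal : ∀ j ∈ Finset.range K,
      ((K.choose (j+1) : ENNReal)) * ENNReal.ofReal (x j) ^ (j+1)
        = ENNReal.ofReal ((K.choose (j+1) : ℝ) * (x j) ^ (j+1)) := by
    intro j hj
    have hx0 : 0 ≤ x j := (hx01 j hj).1
    rw [ENNReal.ofReal_mul (by positivity), ← ENNReal.ofReal_pow hx0,
      ENNReal.ofReal_natCast]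
  calc μ {ω | simesOn Finset.univ (fun k => P k ω) ≤ α}
      ≤ μ (⋃ j ∈ Finset.range K, ⋃ A ∈ Finset.powersetCard (j+1) (Finset.univ : Finset (Fin K)),
          ⋂ k ∈ A, {ω | P k ω ≤ x j}) := measure_mono hsub
    _ ≤ ∑ j ∈ Finset.range K, μ (⋃ A ∈ Finset.powersetCard (j+1) (Finset.univ : Finset (Fin K)),
          ⋂ k ∈ A, {ω | P k ω ≤ x j}) := MeasureTheory.measure_biUnion_finset_le _ _
    _ ≤ ∑ j ∈ Finset.range K, ∑ A ∈ Finset.powersetCard (j+1) (Finset.univ : Finset (Fin K)),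
          μ (⋂ k ∈ A, {ω | P k ω ≤ x j}) :=
        Finset.sum_le_sum fun j _ => MeasureTheory.measure_biUnion_finset_le _ _
    _ ≤ ∑ j ∈ Finset.range K, ∑ A ∈ Finset.powersetCard (j+1) (Finset.univ : Finset (Fin K)),
          ∏ k ∈ A, μ {ω | P k ω ≤ x j} :=
        Finset.sum_le_sum fun j _ => Finset.sum_le_sum fun A _ => hwnd A (x j)
    _ = ∑ j ∈ Finset.range K, ∑ A ∈ Finset.powersetCard (j+1) (Finset.univ : Finset (Fin K)),
          ENNReal.ofReal (x j) ^ (j+1) := by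
        refine Finset.sum_congr rfl fun j hj => Finset.sum_congr rfl fun A hA => ?_
        have hAc : A.card = j+1 := (Finset.mem_powersetCard.mp hA).2
        rw [Finset.prod_congr rfl fun k _ => hunif k (x j) (hx01 j hj),
          Finset.prod_const, hAc]
    _ = ∑ j ∈ Finset.range K,
          ((K.choose (j+1) : ENNReal)) * ENNReal.ofReal (x j) ^ (j+1) := by
        refine Finset.sum_congr rfl fun j hj => ?_
        rw [Finset.sum_const, Finset.card_powersetCard, hcard, nsmul_eq_mul]
    _ = ENNReal.ofReal (∑ j ∈ Finset.range K, (K.choose (j+1) : ℝ) * (x j) ^ (j+1)) := by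
        rw [ENNReal.ofReal_sum_of_nonneg fun j hj => by positivity]
        exact Finset.sum_congr rfl hofReal
    _ ≤ ENNReal.ofReal (1.26 * α) :=
        ENNReal.ofReal_le_ofReal (real_sum_bound K hK α h0 h1)
end

section
/- A random vector (X_1,...,X_K) is negatively lower orthant dependent if and only if for all nonnegative decreasing functions φ_1,...,φ_K : ℝ → [0,∞), E[∏_k φ_k(X_k)] ≤ ∏_k E[φ_k(X_k)]. -/
open MeasureTheory Set ENNReal

lemma nlod_lowerSet {Ω : Type*} [MeasurableSpace Ω] (μ : Measure Ω)
    [IsProbabilityMeasure μ] (K : ℕ) (X : Fin K → Ω → ℝ)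
    (hx : ∀ x : Fin K → ℝ,
      μ (⋂ k, {ω | X k ω ≤ x k}) ≤ ∏ k, μ {ω | X k ω ≤ x k})
    (L : Fin K → Set ℝ) (hL : ∀ k, IsLowerSet (L k)) :
    μ (⋂ k, X k ⁻¹' L k) ≤ ∏ k, μ (X k ⁻¹' L k) := by
  by_cases hne : ∀ k, (L k).Nonempty
  · -- approximate each lower set by Iic's
    classical
    set c : Fin K → ℕ → ℝ := fun k n =>
      if BddAbove (L k) then
        (if sSup (L k) ∈ L k then sSup (L k) else sSup (L k) - 1/(n+1))
      else n with hc
    have hmono : ∀ k, Monotone (c k) := by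
      intro k m n hmn
      simp only [hc]
      split_ifs with h1 h2
      · exact le_rfl
      · have : (1:ℝ)/(n+1) ≤ 1/(m+1) := by
          apply one_div_le_one_div_of_le
          · positivity
          · exact_mod_cast by omega
        linarith
      · exact_mod_cast hmn
    have hsub : ∀ k n, Iic (c k n) ⊆ L k := by
      intro k n t ht
      simp only [hc] at ht
      split_ifs at ht with h1 h2
      · exact hL k ht h2
      · have htlt : t < sSup (L k) := by
          have : (0:ℝ) < 1/(n+1) := by positivity
          simp only [mem_Iic] at ht; linarith
        obtain ⟨y, hy, hty⟩ := exists_lt_of_lt_csSup (hne k) htlt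
        exact hL k hty.le hy
      · -- not bddAbove
        obtain ⟨y, hy, hny⟩ := not_bddAbove_iff.mp h1 (n : ℝ)
        exact hL k (le_trans ht hny.le) hy
    have hcover : ∀ k, ∀ t ∈ L k, ∃ n, t ≤ c k n := by
      intro k t ht
      simp only [hc]
      by_cases h1 : BddAbove (L k)
      · by_cases h2 : sSup (L k) ∈ L k
        · exact ⟨0, by simp [h1, h2, le_csSup h1 ht]⟩
        · have htlt : t < sSup (L k) := lt_of_le_of_ne (le_csSup h1 ht)
            (fun h => h2 (h ▸ ht))
          obtain ⟨n, hn⟩ := exists_nat_one_div_lt (sub_pos.mpr htlt)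
          exact ⟨n, by simp only [h1, h2, if_true, if_false];  linarith⟩
      · exact ⟨⌈t⌉₊, by simp [h1, Nat.le_ceil t]⟩
    have hUnion : (⋂ k, X k ⁻¹' L k) = ⋃ n, ⋂ k, {ω | X k ω ≤ c k n} := by
      ext ω
      simp only [mem_iInter, mem_iUnion, mem_preimage, mem_setOf_eq]
      constructor
      · intro h
        choose f hf using fun k => hcover k _ (h k)
        refine ⟨Finset.univ.sup f, fun k => (hf k).trans (hmono k (Finset.le_sup (Finset.mem_univ k)))⟩
      · rintro ⟨n, h⟩ k
        exact hsub k n (h k)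
    rw [hUnion, (Monotone.directed_le ?_).measure_iUnion]
    · refine iSup_le fun n => (hx (fun k => c k n)).trans ?_
      refine Finset.prod_le_prod' fun k _ => measure_mono fun ω hω => hsub k n hω
    · intro m n hmn
      exact iInter_mono fun k ω hω => le_trans hω (hmono k hmn)
  · push_neg at hne
    obtain ⟨j, hj⟩ := hne
    have : μ (⋂ k, X k ⁻¹' L k) = 0 := by
      apply measure_mono_null (iInter_subset _ j)
      simp [hj]
    simp [this]

lemma nlod_peel {Ω : Type*} [MeasurableSpace Ω] (μ : Measure Ω)
    [IsProbabilityMeasure μ] (K : ℕ) (X : Fin K → Ω → ℝ)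
    (hX : ∀ k, Measurable (X k))
    (hx : ∀ x : Fin K → ℝ,
      μ (⋂ k, {ω | X k ω ≤ x k}) ≤ ∏ k, μ {ω | X k ω ≤ x k})
    (φ : Fin K → ℝ → ℝ) (hφa : ∀ k, Antitone (φ k)) (hφ0 : ∀ k t, 0 ≤ φ k t) :
    ∀ (s : Finset (Fin K)) (t : Fin K → ℝ),
      ∫⁻ ω, (∏ k ∈ s, ENNReal.ofReal (φ k (X k ω))) *
        (∏ k ∈ sᶜ, ({ω' | t k < φ k (X k ω')}.indicator (1 : Ω → ℝ≥0∞) ω)) ∂μ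
      ≤ (∏ k ∈ s, ∫⁻ ω, ENNReal.ofReal (φ k (X k ω)) ∂μ) *
        ∏ k ∈ sᶜ, μ {ω | t k < φ k (X k ω)} := by
  classical
  have hφm : ∀ k, Measurable (fun ω => φ k (X k ω)) :=
    fun k => ((hφa k).measurable).comp (hX k)
  have hsetm : ∀ k (u : ℝ), MeasurableSet {ω | u < φ k (X k ω)} :=
    fun k u => measurableSet_lt measurable_const (hφm k)
  intro s
  induction s using Finset.induction_on with
  | empty =>
    intro t
    simp only [Finset.prod_empty, one_mul, Finset.compl_empty]
    have hpt : ∀ ω, (∏ k, ({ω' | t k < φ k (X k ω')}.indicator (1 : Ω → ℝ≥0∞) ω)) =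
        (⋂ k, {ω' | t k < φ k (X k ω')}).indicator (1 : Ω → ℝ≥0∞) ω := by
      intro ω
      by_cases h : ω ∈ ⋂ k, {ω' | t k < φ k (X k ω')}
      · rw [Set.indicator_of_mem h]
        exact Finset.prod_eq_one fun k _ =>
          Set.indicator_of_mem (Set.mem_iInter.mp h k) _
      · rw [Set.indicator_of_notMem h]
        obtain ⟨k, hk⟩ := not_forall.mp (fun hh => h (Set.mem_iInter.mpr hh))
        exact Finset.prod_eq_zero (Finset.mem_univ k) (Set.indicator_of_notMem hk _)
    rw [lintegral_congr hpt, lintegral_indicator (MeasurableSet.iInter fun k => hsetm k (t k))]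
    simp only [Pi.one_apply, lintegral_const, one_mul, Measure.restrict_apply_univ]
    have := nlod_lowerSet μ K X hx (fun k => {u | t k < φ k u})
      (fun k u' u hu hu' => lt_of_lt_of_le hu' ((hφa k) hu))
    exact this
  | @insert a s ha ih =>
    intro t
    -- abbreviations
    set A : Fin K → Ω → ℝ≥0∞ := fun k ω => ENNReal.ofReal (φ k (X k ω)) with hA
    set I : Fin K → ℝ≥0∞ := fun k => ∫⁻ ω, A k ω ∂μ with hI
    set P : Ω → ℝ≥0∞ := fun ω => ∏ k ∈ (insert a s)ᶜ,
      ({ω' | t k < φ k (X k ω')}.indicator (1 : Ω → ℝ≥0∞) ω) with hP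
    set Q : ℝ≥0∞ := ∏ k ∈ (insert a s)ᶜ, μ {ω | t k < φ k (X k ω)} with hQ
    have hPm : Measurable P := by
      refine Finset.measurable_prod _ fun k _ => ?_
      exact Measurable.indicator measurable_const (hsetm k (t k))
    set R : Ω → ℝ≥0∞ := fun ω => (∏ k ∈ s, A k ω) * P ω with hR
    have hRm : Measurable R := by
      refine Measurable.mul ?_ hPm
      exact Finset.measurable_prod _ fun k _ => (hφm k).ennreal_ofReal
    simp only [Finset.prod_insert ha]
    have hLHS : ∀ ω, A a ω * (∏ k ∈ s, A k ω) * P ω = A a ω * R ω := fun ω => mul_assoc _ _ _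
    calc ∫⁻ ω, A a ω * (∏ k ∈ s, A k ω) * P ω ∂μ
        = ∫⁻ ω, ∫⁻ u, (Set.Ioo (0:ℝ) (φ a (X a ω))).indicator (fun _ => R ω) u ∂(volume) ∂μ := by
          refine lintegral_congr fun ω => ?_
          rw [lintegral_indicator_const measurableSet_Ioo, Real.volume_Ioo, sub_zero]
          simp only [hR, hA, hP]
          ring
      _ = ∫⁻ u, ∫⁻ ω, (Set.Ioo (0:ℝ) (φ a (X a ω))).indicator (fun _ => R ω) u ∂μ ∂(volume) := by
          apply lintegral_lintegral_swap
          have : (Function.uncurry fun ω u =>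
              (Set.Ioo (0:ℝ) (φ a (X a ω))).indicator (fun _ => R ω) u) =
              Set.indicator {p : Ω × ℝ | 0 < p.2 ∧ p.2 < φ a (X a p.1)}
                (fun p => R p.1) := by
            ext p
            have hmemiff : ∀ p : Ω × ℝ, p.2 ∈ Set.Ioo (0:ℝ) (φ a (X a p.1)) ↔
                p ∈ {p : Ω × ℝ | 0 < p.2 ∧ p.2 < φ a (X a p.1)} := fun p => Set.mem_Ioo
            simp only [Function.uncurry]
            by_cases h : p.2 ∈ Set.Ioo (0:ℝ) (φ a (X a p.1))
            · rw [Set.indicator_of_mem h, Set.indicator_of_mem ((hmemiff p).mp h)]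
            · rw [Set.indicator_of_notMem h,
                Set.indicator_of_notMem (fun hc => h ((hmemiff p).mpr hc))]
          rw [this]
          refine (Measurable.indicator (hRm.comp measurable_fst) ?_).aemeasurable
          exact MeasurableSet.inter
            (measurableSet_lt measurable_const measurable_snd)
            (measurableSet_lt measurable_snd ((hφm a).comp measurable_fst))
      _ ≤ ∫⁻ u, (Set.Ioi (0:ℝ)).indicator
            (fun u => ((∏ k ∈ s, I k) * Q) * μ {ω | u < φ a (X a ω)}) u ∂(volume) := by
          refine lintegral_mono fun u => ?_
          by_cases hu : (0:ℝ) < u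
          · rw [Set.indicator_of_mem (Set.mem_Ioi.mpr hu)]
            have hpt : ∀ ω, (Set.Ioo (0:ℝ) (φ a (X a ω))).indicator (fun _ => R ω) u =
                (∏ k ∈ s, A k ω) *
                  ∏ k ∈ sᶜ, ({ω' | Function.update t a u k < φ k (X k ω')}.indicator
                    (1 : Ω → ℝ≥0∞) ω) := by
              intro ω
              have hsc : sᶜ = insert a ((insert a s)ᶜ) := by
                rw [Finset.compl_insert, Finset.insert_erase (Finset.mem_compl.mpr ha)]
              have hanotin : a ∉ (insert a s)ᶜ := by
                simp [Finset.mem_compl]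
              rw [hsc, Finset.prod_insert hanotin, Function.update_self]
              have hPeq : (∏ k ∈ (insert a s)ᶜ,
                  ({ω' | Function.update t a u k < φ k (X k ω')}.indicator (1 : Ω → ℝ≥0∞) ω)) = P ω := by
                refine Finset.prod_congr rfl fun k hk => ?_
                have hka : k ≠ a := fun h => hanotin (h ▸ hk)
                rw [Function.update_of_ne hka]
              rw [hPeq]
              by_cases h : u < φ a (X a ω)
              · have hmem : ω ∈ {ω' | u < φ a (X a ω')} := h
                rw [Set.indicator_of_mem (Set.mem_Ioo.mpr ⟨hu, h⟩),
                  Set.indicator_of_mem hmem]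
                simp only [Pi.one_apply, one_mul, hR]
              · have hmem : ω ∉ {ω' | u < φ a (X a ω')} := h
                rw [Set.indicator_of_notMem (fun hm => h (Set.mem_Ioo.mp hm).2),
                  Set.indicator_of_notMem hmem]
                simp
            calc ∫⁻ ω, (Set.Ioo (0:ℝ) (φ a (X a ω))).indicator (fun _ => R ω) u ∂μ
                = ∫⁻ ω, (∏ k ∈ s, A k ω) *
                    ∏ k ∈ sᶜ, ({ω' | Function.update t a u k < φ k (X k ω')}.indicator
                      (1 : Ω → ℝ≥0∞) ω) ∂μ := lintegral_congr hpt
              _ ≤ (∏ k ∈ s, I k) * ∏ k ∈ sᶜ, μ {ω | Function.update t a u k < φ k (X k ω)} :=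
                  ih (Function.update t a u)
              _ = ((∏ k ∈ s, I k) * Q) * μ {ω | u < φ a (X a ω)} := by
                  have hsc : sᶜ = insert a ((insert a s)ᶜ) := by
                    rw [Finset.compl_insert, Finset.insert_erase (Finset.mem_compl.mpr ha)]
                  have hanotin : a ∉ (insert a s)ᶜ := by simp [Finset.mem_compl]
                  rw [hsc, Finset.prod_insert hanotin, Function.update_self]
                  have : (∏ k ∈ (insert a s)ᶜ, μ {ω | Function.update t a u k < φ k (X k ω)}) = Q := by
                    refine Finset.prod_congr rfl fun k hk => ?_
                    have hka : k ≠ a := fun h => hanotin (h ▸ hk)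
                    rw [Function.update_of_ne hka]
                  rw [this]; ring
          · rw [Set.indicator_of_notMem (fun hm => hu (Set.mem_Ioi.mp hm))]
            have : ∀ ω, (Set.Ioo (0:ℝ) (φ a (X a ω))).indicator (fun _ => R ω) u = 0 := by
              intro ω
              exact Set.indicator_of_notMem (fun hm => hu (Set.mem_Ioo.mp hm).1) _
            simp [lintegral_congr this]
      _ = ((∏ k ∈ s, I k) * Q) * ∫⁻ u in Set.Ioi (0:ℝ), μ {ω | u < φ a (X a ω)} ∂(volume) := by
          rw [lintegral_indicator measurableSet_Ioi]
          rw [lintegral_const_mul _ ?_]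
          have hanti : Antitone (fun u => μ {ω | u < φ a (X a ω)}) := by
            intro u v huv
            exact measure_mono fun ω hω => lt_of_le_of_lt huv hω
          exact hanti.measurable
      _ = ((∏ k ∈ s, I k) * Q) * I a := by
          congr 1
          rw [hI]
          exact (lintegral_eq_lintegral_meas_lt μ
            (Filter.Eventually.of_forall fun ω => hφ0 a (X a ω)) (hφm a).aemeasurable).symm
      _ = I a * (∏ k ∈ s, I k) * Q := by ring

/-- A random vector is negatively lower orthant dependent iff for all nonnegative
decreasing functions `φ₁,…,φ_K`, `E[∏ φₖ(Xₖ)] ≤ ∏ E[φₖ(Xₖ)]` (expectations assumed finite). -/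
theorem nlod_iff_functional {Ω : Type*} [MeasurableSpace Ω] (μ : Measure Ω)
    [IsProbabilityMeasure μ] (K : ℕ) (X : Fin K → Ω → ℝ)
    (hX : ∀ k, Measurable (X k)) :
    (∀ x : Fin K → ℝ,
      μ (⋂ k, {ω | X k ω ≤ x k}) ≤ ∏ k, μ {ω | X k ω ≤ x k}) ↔
    (∀ φ : Fin K → ℝ → ℝ, (∀ k, Antitone (φ k)) → (∀ k t, 0 ≤ φ k t) →
      (∀ k, Integrable (fun ω => φ k (X k ω)) μ) →
      Integrable (fun ω => ∏ k, φ k (X k ω)) μ →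
      ∫ ω, ∏ k, φ k (X k ω) ∂μ ≤ ∏ k, ∫ ω, φ k (X k ω) ∂μ) := by
  constructor
  · intro hx φ hφa hφ0 hInt hIntProd
    have key := nlod_peel μ K X hX hx φ hφa hφ0 Finset.univ (fun _ => 0)
    simp only [Finset.compl_univ, Finset.prod_empty, mul_one] at key
    have h1 : ∫ ω, ∏ k, φ k (X k ω) ∂μ =
        (∫⁻ ω, ∏ k, ENNReal.ofReal (φ k (X k ω)) ∂μ).toReal := by
      rw [integral_eq_lintegral_of_nonneg_ae
        (Filter.Eventually.of_forall fun ω => Finset.prod_nonneg fun k _ => hφ0 k _)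
        hIntProd.aestronglyMeasurable]
      congr 1
      exact lintegral_congr fun ω =>
        ENNReal.ofReal_prod_of_nonneg fun k _ => hφ0 k (X k ω)
    have h2 : ∀ k, ∫ ω, φ k (X k ω) ∂μ =
        (∫⁻ ω, ENNReal.ofReal (φ k (X k ω)) ∂μ).toReal := fun k =>
      integral_eq_lintegral_of_nonneg_ae
        (Filter.Eventually.of_forall fun ω => hφ0 k (X k ω))
        (hInt k).aestronglyMeasurable
    have h3 : ∏ k, ∫ ω, φ k (X k ω) ∂μ =
        (∏ k, ∫⁻ ω, ENNReal.ofReal (φ k (X k ω)) ∂μ).toReal := by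
      rw [ENNReal.toReal_prod]
      exact Finset.prod_congr rfl fun k _ => h2 k
    rw [h1, h3]
    exact ENNReal.toReal_mono
      (ENNReal.prod_ne_top fun k _ => (hInt k).lintegral_lt_top.ne) key
  · intro hfun x
    classical
    set φ : Fin K → ℝ → ℝ := fun k => (Iic (x k)).indicator 1 with hφ
    have hφa : ∀ k, Antitone (φ k) := by
      intro k u v huv
      simp only [hφ]
      by_cases hv : v ∈ Iic (x k)
      · have hu : u ∈ Iic (x k) := le_trans huv hv
        rw [Set.indicator_of_mem hv, Set.indicator_of_mem hu]
        exact le_rfl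
      · rw [Set.indicator_of_notMem hv]
        exact Set.indicator_apply_nonneg fun _ => zero_le_one
    have hφ0 : ∀ k t, 0 ≤ φ k t := fun k t =>
      Set.indicator_apply_nonneg fun _ => zero_le_one
    have hsets : ∀ k, MeasurableSet {ω | X k ω ≤ x k} :=
      fun k => measurableSet_le (hX k) measurable_const
    have hcomp : ∀ k, (fun ω => φ k (X k ω)) =
        Set.indicator {ω | X k ω ≤ x k} (fun _ => (1:ℝ)) := by
      intro k
      ext ω
      simp only [hφ]
      by_cases h : X k ω ≤ x k
      · have h1 : X k ω ∈ Iic (x k) := h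
        have h2 : ω ∈ {ω' | X k ω' ≤ x k} := h
        rw [Set.indicator_of_mem h1, Set.indicator_of_mem h2]
        rfl
      · have h1 : X k ω ∉ Iic (x k) := h
        have h2 : ω ∉ {ω' | X k ω' ≤ x k} := h
        rw [Set.indicator_of_notMem h1, Set.indicator_of_notMem h2]
    have hInt : ∀ k, Integrable (fun ω => φ k (X k ω)) μ := by
      intro k
      rw [hcomp k]
      exact (integrable_const (1:ℝ)).indicator (hsets k)
    have hprod : (fun ω => ∏ k, φ k (X k ω)) =
        Set.indicator (⋂ k, {ω | X k ω ≤ x k}) (fun _ => (1:ℝ)) := by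
      ext ω
      by_cases h : ω ∈ ⋂ k, {ω | X k ω ≤ x k}
      · rw [Set.indicator_of_mem h]
        refine Finset.prod_eq_one fun k _ => ?_
        have : X k ω ∈ Iic (x k) := Set.mem_iInter.mp h k
        simp only [hφ]
        rw [Set.indicator_of_mem this]; rfl
      · rw [Set.indicator_of_notMem h]
        obtain ⟨k, hk⟩ := not_forall.mp (fun hh => h (Set.mem_iInter.mpr hh))
        refine Finset.prod_eq_zero (Finset.mem_univ k) ?_
        have hk' : X k ω ∉ Iic (x k) := hk
        simp only [hφ]
        exact Set.indicator_of_notMem hk' _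
    have hIntProd : Integrable (fun ω => ∏ k, φ k (X k ω)) μ := by
      rw [hprod]
      exact (integrable_const (1:ℝ)).indicator (MeasurableSet.iInter hsets)
    have := hfun φ hφa hφ0 hInt hIntProd
    rw [show (∫ ω, ∏ k, φ k (X k ω) ∂μ) = (μ (⋂ k, {ω | X k ω ≤ x k})).toReal by
        rw [congrArg (fun f => ∫ ω, f ω ∂μ) hprod,
          integral_indicator_const (1:ℝ) (MeasurableSet.iInter hsets), smul_eq_mul, mul_one]; rfl] at this
    rw [show (∏ k, ∫ ω, φ k (X k ω) ∂μ) = (∏ k, μ {ω | X k ω ≤ x k}).toReal by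
        rw [ENNReal.toReal_prod]
        refine Finset.prod_congr rfl fun k _ => ?_
        rw [congrArg (fun f => ∫ ω, f ω ∂μ) (hcomp k),
          integral_indicator_const (1:ℝ) (hsets k), smul_eq_mul, mul_one]; rfl] at this
    exact (ENNReal.toReal_le_toReal (measure_ne_top μ _)
      (ENNReal.prod_ne_top fun k _ => measure_ne_top μ _)).mp this
end

section
/- If e-values E_1,...,E_K are negatively upper orthant dependent, then for each k ∈ {1,...,K}, the product ∏_{i=1}^k E_i is also an e-value, i.e., it is nonnegative and has expectation at most 1. -/
open MeasureTheory


lemma lintegral_pi_prod_aux {n : ℕ} {α : Type*} [MeasurableSpace α]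
    (ν : Fin n → Measure α) [∀ i, SigmaFinite (ν i)]
    (g : Fin n → α → ENNReal) (hg : ∀ i, Measurable (g i)) :
    ∫⁻ x, ∏ i, g i (x i) ∂Measure.pi ν = ∏ i, ∫⁻ t, g i t ∂ν i := by
  induction n with
  | zero => simp [lintegral_const, Measure.pi_univ]
  | succ n ih =>
      have hmp := (measurePreserving_piFinSuccAbove (fun i : Fin (n+1) => ν i) 0).symm
      have hF : Measurable fun x : Fin (n+1) → α => ∏ i, g i (x i) :=
        Finset.measurable_prod _ fun i _ => (hg i).comp (measurable_pi_apply i)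
      rw [← hmp.lintegral_comp hF]
      have heq : ∀ p : α × (Fin n → α),
          (∏ i, g i (((MeasurableEquiv.piFinSuccAbove (fun _ : Fin (n+1) => α) 0).symm p) i))
            = g 0 p.1 * ∏ j : Fin n, g (Fin.succ j) (p.2 j) := by
        intro p
        rw [Fin.prod_univ_succ]
        simp [MeasurableEquiv.piFinSuccAbove, Fin.insertNthEquiv, Fin.insertNth_zero,
          Fin.zero_succAbove]
      calc ∫⁻ p, (∏ i, g i (((MeasurableEquiv.piFinSuccAbove (fun _ : Fin (n+1) => α) 0).symm p) i))
              ∂(ν 0).prod (Measure.pi fun j => ν ((0 : Fin (n+1)).succAbove j))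
          = ∫⁻ p, g 0 p.1 * ∏ j : Fin n, g (Fin.succ j) (p.2 j)
              ∂(ν 0).prod (Measure.pi fun j => ν ((0 : Fin (n+1)).succAbove j)) :=
            lintegral_congr heq
        _ = (∫⁻ t, g 0 t ∂ν 0) *
              ∫⁻ y, ∏ j : Fin n, g (Fin.succ j) (y j)
                ∂Measure.pi fun j => ν ((0 : Fin (n+1)).succAbove j) :=
            lintegral_prod_mul (hg 0).aemeasurable
              (Finset.measurable_prod _ fun j _ =>
                ((hg _).comp (measurable_pi_apply j))).aemeasurable
        _ = ∏ i, ∫⁻ t, g i t ∂ν i := by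
            rw [ih (fun j => ν ((0 : Fin (n+1)).succAbove j))
              (fun j => g (Fin.succ j)) (fun j => hg j.succ)]
            rw [Fin.prod_univ_succ]
            simp [Fin.zero_succAbove]

/-- If e-values `E₁,…,E_K` are negatively upper orthant dependent, then for each `k`
the product `∏_{i ≤ k} Eᵢ` is also an e-value (nonnegative with expectation at most 1). -/
theorem nuod_evalues_product {Ω : Type*} [MeasurableSpace Ω] (μ : Measure Ω)
    [IsProbabilityMeasure μ] (K : ℕ) (E : Fin K → Ω → ℝ)
    (hmeas : ∀ i, Measurable (E i)) (hnn : ∀ i ω, 0 ≤ E i ω)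
    (hev : ∀ i, ∫⁻ ω, ENNReal.ofReal (E i ω) ∂μ ≤ 1)
    (hnuod : ∀ x : Fin K → ℝ,
      μ (⋂ i, {ω | x i < E i ω}) ≤ ∏ i, μ {ω | x i < E i ω}) :
    ∀ k : Fin K, (∀ ω, 0 ≤ ∏ i ∈ Finset.Iic k, E i ω) ∧
      ∫⁻ ω, ∏ i ∈ Finset.Iic k, ENNReal.ofReal (E i ω) ∂μ ≤ 1 := by
  intro k
  refine ⟨fun ω => Finset.prod_nonneg fun i _ => hnn i ω, ?_⟩
  -- the auxiliary coordinate measures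
  set ν : Fin K → Measure ℝ := fun i =>
    if i ≤ k then volume.restrict (Set.Ioi (0:ℝ)) else Measure.dirac (-1) with hν
  haveI hsf : ∀ i, SigmaFinite (ν i) := by
    intro i
    rw [hν]
    dsimp only
    split <;> infer_instance
  set π : Measure (Fin K → ℝ) := Measure.pi ν with hπ
  -- Step A: rewrite the product as the π-measure of a rectangle
  have hA : ∀ ω, ∏ i ∈ Finset.Iic k, ENNReal.ofReal (E i ω)
      = π (Set.univ.pi fun i => Set.Iio (E i ω)) := by
    intro ω
    rw [hπ, Measure.pi_pi]
    rw [← Finset.prod_subset (Finset.subset_univ (Finset.Iic k)) (fun i _ hi => ?_)]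
    · refine Finset.prod_congr rfl fun i hi => ?_
      have hik : i ≤ k := Finset.mem_Iic.mp hi
      rw [hν]
      simp only [if_pos hik]
      rw [Measure.restrict_apply measurableSet_Iio, Set.inter_comm, Set.Ioi_inter_Iio]
      simp [Real.volume_Ioo]
    · have hik : ¬ i ≤ k := fun h => hi (Finset.mem_Iic.mpr h)
      rw [hν]
      simp only [if_neg hik]
      exact Measure.dirac_apply_of_mem (by simpa using lt_of_lt_of_le neg_one_lt_zero (hnn i ω))
  -- the joint set
  set S : Set (Ω × (Fin K → ℝ)) := {p | ∀ i, p.2 i < E i p.1} with hSdef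
  have hS : MeasurableSet S := by
    have : S = ⋂ i, {p : Ω × (Fin K → ℝ) | p.2 i < E i p.1} := by
      ext p; simp [hSdef, Set.mem_iInter]
    rw [this]
    refine MeasurableSet.iInter fun i => ?_
    have h1 : Measurable fun p : Ω × (Fin K → ℝ) => p.2 i :=
      (measurable_pi_apply i).comp measurable_snd
    have h2 : Measurable fun p : Ω × (Fin K → ℝ) => E i p.1 := (hmeas i).comp measurable_fst
    exact measurableSet_lt h1 h2
  -- Step B: Tonelli swap
  have key : ∫⁻ ω, π (Set.univ.pi fun i => Set.Iio (E i ω)) ∂μ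
      = ∫⁻ x, μ (⋂ i, {ω | x i < E i ω}) ∂π := by
    have h1 : ∀ ω, π (Set.univ.pi fun i => Set.Iio (E i ω))
        = ∫⁻ x, S.indicator 1 (ω, x) ∂π := by
      intro ω
      have hset : (Set.univ.pi fun i => Set.Iio (E i ω)) = {x : Fin K → ℝ | (ω, x) ∈ S} := by
        ext x; simp [hSdef, Set.mem_pi]
      have hms : MeasurableSet {x : Fin K → ℝ | (ω, x) ∈ S} :=
        measurable_prodMk_left hS
      rw [hset, ← lintegral_indicator_one hms]
      refine lintegral_congr fun x => ?_
      by_cases h : (ω, x) ∈ S <;> simp [h]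
    have h2 : ∀ x : Fin K → ℝ, μ (⋂ i, {ω | x i < E i ω})
        = ∫⁻ ω, S.indicator 1 (ω, x) ∂μ := by
      intro x
      have hset : (⋂ i, {ω | x i < E i ω}) = {ω : Ω | (ω, x) ∈ S} := by
        ext ω; simp [hSdef, Set.mem_iInter]
      have hms : MeasurableSet {ω : Ω | (ω, x) ∈ S} :=
        measurable_prodMk_right hS
      rw [hset, ← lintegral_indicator_one hms]
      refine lintegral_congr fun ω => ?_
      by_cases h : (ω, x) ∈ S <;> simp [h]
    calc ∫⁻ ω, π (Set.univ.pi fun i => Set.Iio (E i ω)) ∂μ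
        = ∫⁻ ω, ∫⁻ x, S.indicator 1 (ω, x) ∂π ∂μ := lintegral_congr h1
      _ = ∫⁻ x, ∫⁻ ω, S.indicator 1 (ω, x) ∂μ ∂π := by
          refine lintegral_lintegral_swap ?_
          exact ((measurable_const.indicator hS :
            Measurable (S.indicator (1 : Ω × (Fin K → ℝ) → ENNReal)))).aemeasurable
      _ = ∫⁻ x, μ (⋂ i, {ω | x i < E i ω}) ∂π := (lintegral_congr h2).symm
  -- Step C: product of marginal integrals
  have hgmeas : ∀ i : Fin K, Measurable fun t : ℝ => μ {ω | t < E i ω} := by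
    intro i
    have : Antitone fun t : ℝ => μ {ω | t < E i ω} := by
      intro a b hab
      exact measure_mono fun ω hω => lt_of_le_of_lt hab hω
    exact this.measurable
  have hC : ∫⁻ x, ∏ i, μ {ω | x i < E i ω} ∂π = ∏ i, ∫⁻ t, μ {ω | t < E i ω} ∂ν i := by
    rw [hπ]
    exact lintegral_pi_prod_aux ν (fun i t => μ {ω | t < E i ω}) hgmeas
  -- Step D: each marginal integral is at most 1
  have hD : ∀ i : Fin K, ∫⁻ t, μ {ω | t < E i ω} ∂ν i ≤ 1 := by
    intro i
    rw [hν]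
    dsimp only
    split
    · rw [← lintegral_eq_lintegral_meas_lt μ (Filter.Eventually.of_forall (hnn i))
        (hmeas i).aemeasurable]
      exact hev i
    · rw [lintegral_dirac]
      have : {ω : Ω | (-1 : ℝ) < E i ω} = Set.univ := by
        ext ω; simpa using lt_of_lt_of_le neg_one_lt_zero (hnn i ω)
      rw [this]
      simp
  calc ∫⁻ ω, ∏ i ∈ Finset.Iic k, ENNReal.ofReal (E i ω) ∂μ
      = ∫⁻ ω, π (Set.univ.pi fun i => Set.Iio (E i ω)) ∂μ := lintegral_congr hA
    _ = ∫⁻ x, μ (⋂ i, {ω | x i < E i ω}) ∂π := key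
    _ ≤ ∫⁻ x, ∏ i, μ {ω | x i < E i ω} ∂π := lintegral_mono fun x => hnuod x
    _ = ∏ i, ∫⁻ t, μ {ω | t < E i ω} ∂ν i := hC
    _ ≤ 1 := Finset.prod_le_one (fun i _ => zero_le) (fun i _ => hD i)
end

section
/- If e-values E_1,...,E_K are negatively upper orthant dependent, then for any constants λ_1,...,λ_K ∈ [0,1], the product ∏_{k=1}^K (1 − λ_k + λ_k·E_k) is an e-value. -/
open MeasureTheory

private lemma lintegral_pi_prod_aux_s11 : ∀ (K : ℕ) (g : Fin K → ℝ → ENNReal),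
    (∀ k, Measurable (g k)) →
    ∫⁻ t, ∏ k, g k (t k) ∂(Measure.pi fun _ : Fin K => (volume : Measure ℝ))
      = ∏ k, ∫⁻ s, g k s := by
  intro K
  induction K with
  | zero =>
      intro g hg
      simp [Measure.pi_of_empty]
  | succ n ih =>
      intro g hg
      have hpres := measurePreserving_piFinSuccAbove
        (fun _ : Fin (n + 1) => (volume : Measure ℝ)) 0
      set e := MeasurableEquiv.piFinSuccAbove (fun _ : Fin (n + 1) => ℝ) 0
      have h1 : ∫⁻ t, ∏ k, g k (t k) ∂(Measure.pi fun _ : Fin (n+1) => (volume : Measure ℝ))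
          = ∫⁻ p, ∏ k, g k ((e.symm p) k)
              ∂((volume : Measure ℝ).prod (Measure.pi fun _ : Fin n => (volume : Measure ℝ))) := by
        rw [hpres.lintegral_map_equiv (fun p => ∏ k, g k ((e.symm p) k)) e]
        congr 1
        funext t
        simp
      rw [h1]
      have h2 : ∀ x : ℝ, ∀ y : Fin n → ℝ,
          ∏ k, g k ((e.symm (x, y)) k) = g 0 x * ∏ j : Fin n, g j.succ (y j) := by
        intro x y
        have h0 : (e.symm (x, y)) 0 = x := by
          simp [e, MeasurableEquiv.piFinSuccAbove]
        have hs : ∀ j : Fin n, (e.symm (x, y)) j.succ = y j := by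
          intro j
          simp [e, MeasurableEquiv.piFinSuccAbove]
        rw [Fin.prod_univ_succ, h0]
        simp_rw [hs]
      have hmble : Measurable fun p : ℝ × (Fin n → ℝ) => g 0 p.1 * ∏ j : Fin n, g j.succ (p.2 j) := by
        apply Measurable.mul
        · exact (hg 0).comp measurable_fst
        · exact Finset.measurable_prod _ fun j _ =>
            (hg j.succ).comp ((measurable_pi_apply j).comp measurable_snd)
      have h3 : ∫⁻ p, ∏ k, g k ((e.symm p) k)
            ∂((volume : Measure ℝ).prod (Measure.pi fun _ : Fin n => (volume : Measure ℝ)))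
          = ∫⁻ p, g 0 p.1 * ∏ j : Fin n, g j.succ (p.2 j)
            ∂((volume : Measure ℝ).prod (Measure.pi fun _ : Fin n => (volume : Measure ℝ))) := by
        apply lintegral_congr
        intro p
        exact h2 p.1 p.2
      rw [h3, lintegral_prod _ hmble.aemeasurable]
      have h4 : ∀ x : ℝ, ∫⁻ y, g 0 x * ∏ j : Fin n, g j.succ (y j)
            ∂(Measure.pi fun _ : Fin n => (volume : Measure ℝ))
          = g 0 x * ∏ j : Fin n, ∫⁻ s, g j.succ s := by
        intro x
        rw [lintegral_const_mul _ (Finset.measurable_prod _ fun j _ =>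
          (hg j.succ).comp (measurable_pi_apply j))]
        rw [ih (fun j => g j.succ) (fun j => hg j.succ)]
      simp_rw [h4]
      rw [lintegral_mul_const _ (hg 0), Fin.prod_univ_succ]

/-- If e-values `E₁,…,E_K` are negatively upper orthant dependent, then for any constants
`λ₁,…,λ_K ∈ [0,1]`, the product `∏ (1 - λₖ + λₖ Eₖ)` is an e-value. -/
theorem nuod_evalues_lambda_product {Ω : Type*} [MeasurableSpace Ω] (μ : Measure Ω)
    [IsProbabilityMeasure μ] (K : ℕ) (E : Fin K → Ω → ℝ)
    (hmeas : ∀ i, Measurable (E i)) (hnn : ∀ i ω, 0 ≤ E i ω)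
    (hev : ∀ i, ∫⁻ ω, ENNReal.ofReal (E i ω) ∂μ ≤ 1)
    (hnuod : ∀ x : Fin K → ℝ,
      μ (⋂ i, {ω | x i < E i ω}) ≤ ∏ i, μ {ω | x i < E i ω})
    (lam : Fin K → ℝ) (hlam0 : ∀ k, 0 ≤ lam k) (hlam1 : ∀ k, lam k ≤ 1) :
    (∀ ω, 0 ≤ ∏ k, (1 - lam k + lam k * E k ω)) ∧
      ∫⁻ ω, ENNReal.ofReal (∏ k, (1 - lam k + lam k * E k ω)) ∂μ ≤ 1 := by
  set F : Fin K → Ω → ℝ := fun k ω => 1 - lam k + lam k * E k ω with hF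
  have hFnn : ∀ k ω, 0 ≤ F k ω := by
    intro k ω
    have h1 : 0 ≤ lam k * E k ω := mul_nonneg (hlam0 k) (hnn k ω)
    have h2 := hlam1 k
    simp only [hF]; linarith
  have hFmeas : ∀ k, Measurable (F k) :=
    fun k => measurable_const.add (measurable_const.mul (hmeas k))
  refine ⟨fun ω => Finset.prod_nonneg fun k _ => hFnn k ω, ?_⟩
  -- single-factor bound
  have hFint : ∀ k, ∫⁻ ω, ENNReal.ofReal (F k ω) ∂μ ≤ 1 := by
    intro k
    have heq : ∀ ω, ENNReal.ofReal (F k ω)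
        = ENNReal.ofReal (1 - lam k) + ENNReal.ofReal (lam k) * ENNReal.ofReal (E k ω) := by
      intro ω
      rw [show F k ω = (1 - lam k) + lam k * E k ω from rfl,
        ENNReal.ofReal_add (by linarith [hlam1 k]) (mul_nonneg (hlam0 k) (hnn k ω)),
        ENNReal.ofReal_mul (hlam0 k)]
    calc ∫⁻ ω, ENNReal.ofReal (F k ω) ∂μ
        = ∫⁻ ω, (ENNReal.ofReal (1 - lam k)
            + ENNReal.ofReal (lam k) * ENNReal.ofReal (E k ω)) ∂μ :=
          lintegral_congr heq
      _ = ENNReal.ofReal (1 - lam k) + ENNReal.ofReal (lam k)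
            * ∫⁻ ω, ENNReal.ofReal (E k ω) ∂μ := by
          rw [lintegral_add_left measurable_const, lintegral_const,
            lintegral_const_mul _ (hmeas k).ennreal_ofReal]
          simp
      _ ≤ ENNReal.ofReal (1 - lam k) + ENNReal.ofReal (lam k) * 1 := by
          gcongr
          exact hev k
      _ = 1 := by
          rw [mul_one, ← ENNReal.ofReal_add (by linarith [hlam1 k]) (hlam0 k)]
          norm_num
  -- the product measure on coordinates
  set ν : Measure (Fin K → ℝ) := Measure.pi fun _ : Fin K => (volume : Measure ℝ) with hν
  -- measurable sets in products
  have hBmeas : ∀ k, MeasurableSet {q : ℝ × Ω | q.1 ∈ Set.Ioo 0 (F k q.2)} := by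
    intro k
    have : {q : ℝ × Ω | q.1 ∈ Set.Ioo 0 (F k q.2)}
        = {q : ℝ × Ω | 0 < q.1} ∩ {q : ℝ × Ω | q.1 < F k q.2} := by
      ext q; simp only [Set.mem_Ioo, Set.mem_setOf_eq, Set.mem_inter_iff]
    rw [this]
    exact (measurableSet_lt measurable_const measurable_fst).inter
      (measurableSet_lt measurable_fst ((hFmeas k).comp measurable_snd))
  have hAmeas : MeasurableSet {p : Ω × (Fin K → ℝ) | ∀ k, p.2 k ∈ Set.Ioo 0 (F k p.1)} := by
    have : {p : Ω × (Fin K → ℝ) | ∀ k, p.2 k ∈ Set.Ioo 0 (F k p.1)}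
        = ⋂ k, ({p : Ω × (Fin K → ℝ) | 0 < p.2 k} ∩ {p | p.2 k < F k p.1}) := by
      ext p; simp [Set.mem_Ioo]
    rw [this]
    exact MeasurableSet.iInter fun k =>
      (measurableSet_lt measurable_const (measurable_snd.eval)).inter
        (measurableSet_lt (measurable_snd.eval) ((hFmeas k).comp measurable_fst))
  -- step 1: pointwise identity ofReal (∏ F) = ν (slice)
  have step1 : ∀ ω, ENNReal.ofReal (∏ k, F k ω)
      = ν {t : Fin K → ℝ | ∀ k, t k ∈ Set.Ioo 0 (F k ω)} := by
    intro ω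
    have h1 : {t : Fin K → ℝ | ∀ k, t k ∈ Set.Ioo 0 (F k ω)}
        = Set.pi Set.univ fun k => Set.Ioo 0 (F k ω) := by
      ext t; simp [Set.mem_pi]
    rw [h1, hν, Measure.pi_pi]
    rw [ENNReal.ofReal_prod_of_nonneg fun k _ => hFnn k ω]
    congr 1
    funext k
    rw [Real.volume_Ioo, sub_zero]
  -- rewrite the integral as a product measure of a set
  have step2 : ∫⁻ ω, ENNReal.ofReal (∏ k, F k ω) ∂μ
      = (μ.prod ν) {p : Ω × (Fin K → ℝ) | ∀ k, p.2 k ∈ Set.Ioo 0 (F k p.1)} := by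
    rw [Measure.prod_apply hAmeas]
    apply lintegral_congr
    intro ω
    rw [step1 ω]
    congr 1
  -- swap order
  have step3 : (μ.prod ν) {p : Ω × (Fin K → ℝ) | ∀ k, p.2 k ∈ Set.Ioo 0 (F k p.1)}
      = ∫⁻ t, μ {ω | ∀ k, t k ∈ Set.Ioo 0 (F k ω)} ∂ν := by
    rw [Measure.prod_apply_symm hAmeas]
    apply lintegral_congr
    intro t
    congr 1
  -- NUOD bound on slices
  have key : ∀ t : Fin K → ℝ, μ {ω | ∀ k, t k ∈ Set.Ioo 0 (F k ω)}
      ≤ ∏ k, μ {ω | t k ∈ Set.Ioo 0 (F k ω)} := by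
    intro t
    by_cases hc : ∀ k, 0 < t k ∧ (lam k = 0 → t k < 1)
    · -- all sets are upper orthant sets of E
      set x : Fin K → ℝ := fun k => if lam k = 0 then (-1 : ℝ)
        else (t k - (1 - lam k)) / lam k with hx
      have hset : ∀ k, {ω | t k ∈ Set.Ioo 0 (F k ω)} = {ω | x k < E k ω} := by
        intro k
        obtain ⟨ht0, ht1⟩ := hc k
        ext ω
        simp only [Set.mem_Ioo, Set.mem_setOf_eq, hx]
        by_cases hl : lam k = 0
        · simp only [hl, if_true]
          constructor
          · intro _; linarith [hnn k ω]
          · intro _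
            refine ⟨ht0, ?_⟩
            have : F k ω = 1 := by simp [hF, hl]
            rw [this]; exact ht1 hl
        · have hlpos : 0 < lam k := lt_of_le_of_ne (hlam0 k) (Ne.symm hl)
          simp only [hl, if_false]
          constructor
          · rintro ⟨-, h2⟩
            rw [div_lt_iff₀ hlpos]
            have : F k ω = 1 - lam k + lam k * E k ω := rfl
            rw [this] at h2
            linarith [mul_comm (lam k) (E k ω)]
          · intro h
            rw [div_lt_iff₀ hlpos] at h
            refine ⟨ht0, ?_⟩
            have : F k ω = 1 - lam k + lam k * E k ω := rfl
            rw [this]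
            nlinarith
      have h1 : {ω | ∀ k, t k ∈ Set.Ioo 0 (F k ω)} = ⋂ k, {ω | x k < E k ω} := by
        ext ω
        simp only [Set.mem_iInter, Set.mem_setOf_eq]
        constructor
        · intro h k
          have := h k
          have h2 := hset k
          rw [Set.ext_iff] at h2
          exact (h2 ω).mp this
        · intro h k
          have h2 := hset k
          rw [Set.ext_iff] at h2
          exact (h2 ω).mpr (h k)
      rw [h1]
      calc μ (⋂ k, {ω | x k < E k ω}) ≤ ∏ k, μ {ω | x k < E k ω} := hnuod x
        _ = ∏ k, μ {ω | t k ∈ Set.Ioo 0 (F k ω)} := by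
            apply Finset.prod_congr rfl
            intro k _
            rw [hset k]
    · -- some coordinate kills everything
      push_neg at hc
      obtain ⟨k, hk⟩ := hc
      have hempty : {ω | t k ∈ Set.Ioo 0 (F k ω)} = ∅ := by
        ext ω
        simp only [Set.mem_Ioo, Set.mem_setOf_eq, Set.mem_empty_iff_false, iff_false, not_and]
        intro ht0
        obtain ⟨hl0, hge⟩ := hk ht0
        have hFone : F k ω = 1 := by simp [hF, hl0]
        rw [hFone]
        intro h2; linarith
      have hsub : {ω | ∀ j, t j ∈ Set.Ioo 0 (F j ω)} ⊆ {ω | t k ∈ Set.Ioo 0 (F k ω)} :=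
        fun ω hω => hω k
      have h0 : μ {ω | ∀ j, t j ∈ Set.Ioo 0 (F j ω)} = 0 := by
        have := measure_mono (μ := μ) hsub
        rw [hempty, measure_empty] at this
        exact le_antisymm this zero_le
      rw [h0]
      exact zero_le
  -- the per-coordinate tail function
  set g : Fin K → ℝ → ENNReal := fun k s => μ {ω | s ∈ Set.Ioo 0 (F k ω)} with hg
  have hgmeas : ∀ k, Measurable (g k) := by
    intro k
    have : g k = fun s => μ (Prod.mk s ⁻¹' {q : ℝ × Ω | q.1 ∈ Set.Ioo 0 (F k q.2)}) := by
      funext s; rfl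
    rw [this]
    exact measurable_measure_prodMk_left (hBmeas k)
  have hgint : ∀ k, ∫⁻ s, g k s ≤ 1 := by
    intro k
    have h1 : ∫⁻ s, g k s
        = ((volume : Measure ℝ).prod μ) {q : ℝ × Ω | q.1 ∈ Set.Ioo 0 (F k q.2)} := by
      rw [Measure.prod_apply (hBmeas k)]
      rfl
    have h2 : ((volume : Measure ℝ).prod μ) {q : ℝ × Ω | q.1 ∈ Set.Ioo 0 (F k q.2)}
        = ∫⁻ ω, ENNReal.ofReal (F k ω) ∂μ := by
      rw [Measure.prod_apply_symm (hBmeas k)]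
      apply lintegral_congr
      intro ω
      have : (fun s => (s, ω)) ⁻¹' {q : ℝ × Ω | q.1 ∈ Set.Ioo 0 (F k q.2)}
          = Set.Ioo 0 (F k ω) := by
        ext s; simp
      rw [this, Real.volume_Ioo, sub_zero]
    rw [h1, h2]
    exact hFint k
  calc ∫⁻ ω, ENNReal.ofReal (∏ k, F k ω) ∂μ
      = ∫⁻ t, μ {ω | ∀ k, t k ∈ Set.Ioo 0 (F k ω)} ∂ν := by rw [step2, step3]
    _ ≤ ∫⁻ t, ∏ k, g k (t k) ∂ν := lintegral_mono key
    _ = ∏ k, ∫⁻ s, g k s := lintegral_pi_prod_aux_s11 K g hgmeas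
    _ ≤ ∏ k, 1 := Finset.prod_le_prod' fun k _ => hgint k
    _ = 1 := by simp
end

section
/- Suppose X_1,...,X_n are random variables such that for any nonnegative increasing functions φ_1,...,φ_n, E[∏_i φ_i(X_i)] ≤ ∏_i E[φ_i(X_i)], and suppose each X_i has mean μ_i and satisfies E[exp(λ(X_i − μ_i))] ≤ exp(ψ_i(λ)·v_i) for all λ in the domain of ψ_i. Then for any λ_1,...,λ_n ≥ 0 in the respective domains, exp(Σ_i λ_i(X_i − μ_i) − Σ_i ψ_i(λ_i)·v_i) is an e-value (nonnegative with expectation at most 1). -/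
open MeasureTheory

/-- Chernoff e-variables: if `X₁,…,Xₙ` satisfy the functional form of negative upper
orthant dependence and each `Xᵢ` is `vᵢ`-sub-`ψᵢ` with mean `μᵢ`, then
`exp(∑ λᵢ(Xᵢ − μᵢ) − ∑ ψᵢ(λᵢ) vᵢ)` is an e-value for nonnegative `λᵢ` in the domains. -/
theorem chernoff_evalue {Ω : Type*} [MeasurableSpace Ω] (μ : Measure Ω)
    [IsProbabilityMeasure μ] (n : ℕ) (X : Fin n → Ω → ℝ)
    (ψ : Fin n → ℝ → ℝ) (dom : Fin n → Set ℝ) (v m : Fin n → ℝ)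
    (hint : ∀ i, Integrable (X i) μ) (hmean : ∀ i, ∫ ω, X i ω ∂μ = m i)
    (hfun : ∀ φ : Fin n → ℝ → ℝ, (∀ i, Monotone (φ i)) → (∀ i t, 0 ≤ φ i t) →
      ∫⁻ ω, ∏ i, ENNReal.ofReal (φ i (X i ω)) ∂μ ≤
        ∏ i, ∫⁻ ω, ENNReal.ofReal (φ i (X i ω)) ∂μ)
    (hsub : ∀ i, ∀ l ∈ dom i,
      ∫⁻ ω, ENNReal.ofReal (Real.exp (l * (X i ω - m i))) ∂μ ≤
        ENNReal.ofReal (Real.exp (ψ i l * v i)))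
    (lam : Fin n → ℝ) (hlam0 : ∀ i, 0 ≤ lam i) (hlamdom : ∀ i, lam i ∈ dom i) :
    ∫⁻ ω, ENNReal.ofReal
        (Real.exp (∑ i, lam i * (X i ω - m i) - ∑ i, ψ i (lam i) * v i)) ∂μ ≤ 1 := by
  set c := ∑ i, ψ i (lam i) * v i with hc
  set φ : Fin n → ℝ → ℝ := fun i t => Real.exp (lam i * (t - m i)) with hφ
  have hmono : ∀ i, Monotone (φ i) := fun i =>
    fun a b hab => Real.exp_le_exp.mpr (mul_le_mul_of_nonneg_left (by linarith) (hlam0 i))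
  have hpos : ∀ i t, 0 ≤ φ i t := fun i t => (Real.exp_pos _).le
  have key : ∀ ω, ENNReal.ofReal (Real.exp (∑ i, lam i * (X i ω - m i) - c)) =
      ENNReal.ofReal (Real.exp (-c)) * ∏ i, ENNReal.ofReal (φ i (X i ω)) := by
    intro ω
    rw [sub_eq_add_neg, add_comm, Real.exp_add, ENNReal.ofReal_mul (Real.exp_pos _).le]
    congr 1
    rw [Real.exp_sum, ← ENNReal.ofReal_prod_of_nonneg (fun i _ => (Real.exp_pos _).le)]
  calc ∫⁻ ω, ENNReal.ofReal (Real.exp (∑ i, lam i * (X i ω - m i) - c)) ∂μ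
      = ∫⁻ ω, ENNReal.ofReal (Real.exp (-c)) * ∏ i, ENNReal.ofReal (φ i (X i ω)) ∂μ := by
        simp_rw [key]
    _ = ENNReal.ofReal (Real.exp (-c)) * ∫⁻ ω, ∏ i, ENNReal.ofReal (φ i (X i ω)) ∂μ :=
        lintegral_const_mul' _ _ ENNReal.ofReal_ne_top
    _ ≤ ENNReal.ofReal (Real.exp (-c)) * ∏ i, ∫⁻ ω, ENNReal.ofReal (φ i (X i ω)) ∂μ :=
        mul_le_mul_right (hfun φ hmono hpos) _
    _ ≤ ENNReal.ofReal (Real.exp (-c)) * ∏ i, ENNReal.ofReal (Real.exp (ψ i (lam i) * v i)) :=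
        mul_le_mul_right (Finset.prod_le_prod (fun i _ => zero_le)
          (fun i _ => hsub i (lam i) (hlamdom i))) _
    _ = 1 := by
        rw [← ENNReal.ofReal_prod_of_nonneg (fun i _ => (Real.exp_pos _).le),
          ← Real.exp_sum, ← ENNReal.ofReal_mul (Real.exp_pos _).le, ← Real.exp_add, hc]
        simp
end

section
/- Let X_1,...,X_K be independent random variables with X_{K+1} := X_1, and let f_1,...,f_K : ℝ² → [0,∞) be component-wise increasing functions. Then E[∏_{i=1}^K f_i(X_i, −X_{i+1})] ≤ ∏_{i=1}^K E[f_i(X_i, −X_{i+1})]. -/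
open MeasureTheory Set
open scoped ENNReal


lemma mul_rearrange {a b c d : ℝ≥0∞} (hab : a ≤ b) (hdc : d ≤ c) :
    a * c + b * d ≤ a * d + b * c := by
  obtain ⟨e, rfl⟩ := exists_add_of_le hdc
  calc a * (d + e) + b * d = a * d + (a * e + b * d) := by ring
    _ ≤ a * d + (b * e + b * d) := by
        gcongr
    _ = a * d + b * (d + e) := by ring

lemma cheby {ν : Measure ℝ} [IsProbabilityMeasure ν] {g h : ℝ → ℝ≥0∞}
    (hg : Monotone g) (hh : Antitone h) :
    ∫⁻ x, g x * h x ∂ν ≤ (∫⁻ x, g x ∂ν) * ∫⁻ x, h x ∂ν := by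
  have hgm : Measurable g := hg.measurable
  have hhm : Measurable h := hh.measurable
  have key : ∀ x y : ℝ, g x * h x + g y * h y ≤ g x * h y + g y * h x := by
    intro x y
    rcases le_total x y with hxy | hxy
    · exact mul_rearrange (hg hxy) (hh hxy)
    · rw [add_comm, add_comm (g x * h y)]
      exact mul_rearrange (hg hxy) (hh hxy)
  have lhs : ∫⁻ x, ∫⁻ y, (g x * h x + g y * h y) ∂ν ∂ν = 2 * ∫⁻ x, g x * h x ∂ν := by
    have : ∀ x : ℝ, ∫⁻ y, (g x * h x + g y * h y) ∂ν
        = g x * h x + ∫⁻ y, g y * h y ∂ν := fun x => by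
      rw [lintegral_add_right _ (show Measurable fun y => g y * h y from hgm.mul hhm), lintegral_const]
      simp
    simp only [this]
    rw [lintegral_add_left (show Measurable fun y => g y * h y from hgm.mul hhm), lintegral_const]
    simp [two_mul]
  have rhs : ∫⁻ x, ∫⁻ y, (g x * h y + g y * h x) ∂ν ∂ν
      = 2 * ((∫⁻ x, g x ∂ν) * ∫⁻ x, h x ∂ν) := by
    have : ∀ x, ∫⁻ y, (g x * h y + g y * h x) ∂ν
        = g x * (∫⁻ y, h y ∂ν) + (∫⁻ y, g y ∂ν) * h x := by
      intro x
      rw [lintegral_add_left (hhm.const_mul _), lintegral_const_mul _ hhm,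
        lintegral_mul_const _ hgm]
    simp only [this]
    rw [lintegral_add_left (by fun_prop), lintegral_mul_const _ hgm,
      lintegral_const_mul _ hhm]
    ring
  have hle : (2 : ℝ≥0∞) * ∫⁻ x, g x * h x ∂ν ≤ 2 * ((∫⁻ x, g x ∂ν) * ∫⁻ x, h x ∂ν) := by
    rw [← lhs, ← rhs]
    exact lintegral_mono fun x => lintegral_mono fun y => key x y
  exact (ENNReal.mul_le_mul_iff_right (by norm_num) (by norm_num)).mp hle




lemma meas_pair {k : ℕ} {Φ : ℝ → ℝ → ℝ≥0∞} (hΦ : Measurable (Function.uncurry Φ))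
    (i j : Fin k) : Measurable fun y : Fin k → ℝ => Φ (y i) (y j) := by
  have : (fun y : Fin k → ℝ => Φ (y i) (y j))
      = (Function.uncurry Φ) ∘ (fun y => (y i, y j)) := rfl
  rw [this]
  exact hΦ.comp ((measurable_pi_apply i).prodMk (measurable_pi_apply j))

lemma chain_lemma (n : ℕ) :
    ∀ (m : ℕ → Measure ℝ), (∀ i, IsProbabilityMeasure (m i)) →
    ∀ (Φ : ℕ → ℝ → ℝ → ℝ≥0∞), (∀ i, Measurable (Function.uncurry (Φ i))) →
    (∀ i b, Monotone fun a => Φ i a b) → (∀ i a, Antitone (Φ i a)) →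
    ∀ (H G : ℝ → ℝ≥0∞), Antitone H → Monotone G →
    ∫⁻ y, H (y 0) * G (y (Fin.last n)) *
        ∏ j : Fin n, Φ (j : ℕ) (y j.castSucc) (y j.succ)
        ∂(Measure.pi fun i : Fin (n + 1) => m (i : ℕ)) ≤
      (∫⁻ a, H a ∂(m 0)) * (∫⁻ a, G a ∂(m n)) *
        ∏ j : Fin n, ∫⁻ a, ∫⁻ b, Φ (j : ℕ) a b ∂(m ((j : ℕ) + 1)) ∂(m (j : ℕ)) := by
  induction n with
  | zero =>
    intro m hm Φ hΦm hΦ1 hΦ2 H G hH hG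
    haveI := hm
    have hfam : (fun i : Fin 1 => m (i : ℕ)) = fun _ => m 0 :=
      funext fun i => by rw [Fin.val_eq_zero]
    simp only [Fin.prod_univ_zero, mul_one, hfam]
    have MP := measurePreserving_funUnique (m 0) (Fin 1)
    calc ∫⁻ y : Fin 1 → ℝ, H (y 0) * G (y (Fin.last 0)) ∂(Measure.pi fun _ => m 0)
        = ∫⁻ y : Fin 1 → ℝ, H (y default) * G (y default) ∂(Measure.pi fun _ => m 0) :=
          lintegral_congr fun y => by
            rw [Fin.eq_zero (default : Fin 1), Fin.eq_zero (Fin.last 0)]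
      _ = ∫⁻ a, H a * G a ∂(m 0) := MP.lintegral_comp (hH.measurable.mul hG.measurable)
      _ = ∫⁻ a, G a * H a ∂(m 0) := by simp [mul_comm]
      _ ≤ (∫⁻ a, G a ∂(m 0)) * ∫⁻ a, H a ∂(m 0) := cheby hG hH
      _ = (∫⁻ a, H a ∂(m 0)) * ∫⁻ a, G a ∂(m 0) := mul_comm _ _
  | succ n IH =>
    intro m hm Φ hΦm hΦ1 hΦ2 H G hH hG
    haveI := hm
    set F : (Fin (n + 2) → ℝ) → ℝ≥0∞ := fun y =>
      H (y 0) * G (y (Fin.last (n + 1))) *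
        ∏ j : Fin (n + 1), Φ (j : ℕ) (y j.castSucc) (y j.succ) with hFdef
    have hFmeas : Measurable F := by
      apply Measurable.mul
      · exact (hH.measurable.comp (measurable_pi_apply _)).mul
          (hG.measurable.comp (measurable_pi_apply _))
      · exact Finset.measurable_prod _ fun j _ => meas_pair (hΦm (j : ℕ)) _ _
    have MP := (measurePreserving_piFinSuccAbove (fun i : Fin (n + 2) => m (i : ℕ)) 0).symm
    simp only [Fin.succAbove_zero, Fin.val_succ, Fin.val_zero] at MP
    have hconsm : Measurable
        (fun z : ℝ × (Fin (n + 1) → ℝ) => (Fin.cons z.1 z.2 : Fin (n + 2) → ℝ)) := by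
      refine measurable_pi_iff.2 fun i => ?_
      refine Fin.cases ?_ (fun j => ?_) i
      · simpa using measurable_fst
      · simpa [Function.comp_def] using (measurable_pi_apply j).comp measurable_snd
    have hsymm : ∀ z : ℝ × (Fin (n + 1) → ℝ),
        (MeasurableEquiv.piFinSuccAbove (fun _ : Fin (n + 2) => ℝ) 0).symm z
          = Fin.cons z.1 z.2 := by
      intro z
      rw [MeasurableEquiv.piFinSuccAbove_symm_apply]
      simp only [Fin.insertNthEquiv_zero]
      rfl
    have key : ∫⁻ y, F y ∂(Measure.pi fun i : Fin (n + 2) => m (i : ℕ))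
        = ∫⁻ y, ∫⁻ a, F (Fin.cons a y) ∂(m 0)
            ∂(Measure.pi fun j : Fin (n + 1) => m ((j : ℕ) + 1)) := by
      calc ∫⁻ y, F y ∂(Measure.pi fun i : Fin (n + 2) => m (i : ℕ))
          = ∫⁻ z, F ((MeasurableEquiv.piFinSuccAbove (fun _ : Fin (n + 2) => ℝ) 0).symm z)
              ∂((m 0).prod (Measure.pi fun j : Fin (n + 1) => m ((j : ℕ) + 1))) :=
            (MP.lintegral_comp hFmeas).symm
        _ = ∫⁻ z, F (Fin.cons z.1 z.2)
              ∂((m 0).prod (Measure.pi fun j : Fin (n + 1) => m ((j : ℕ) + 1))) :=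
            lintegral_congr fun z => by rw [hsymm]
        _ = ∫⁻ y, ∫⁻ a, F (Fin.cons a y) ∂(m 0)
              ∂(Measure.pi fun j : Fin (n + 1) => m ((j : ℕ) + 1)) :=
            lintegral_prod_symm _ (hFmeas.comp hconsm).aemeasurable
    have hH'anti : Antitone fun b => ∫⁻ a, Φ 0 a b ∂(m 0) :=
      fun b1 b2 hb => lintegral_mono fun a => hΦ2 0 a hb
    have hPmeas : Measurable fun y : Fin (n + 1) → ℝ =>
        ∏ j : Fin n, Φ ((j : ℕ) + 1) (y j.castSucc) (y j.succ) :=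
      Finset.measurable_prod _ fun j _ => meas_pair (hΦm _) _ _
    have hcons_eval : ∀ (a : ℝ) (y : Fin (n + 1) → ℝ), F (Fin.cons a y)
        = (H a * Φ 0 a (y 0)) * (G (y (Fin.last n)) *
            ∏ j : Fin n, Φ ((j : ℕ) + 1) (y j.castSucc) (y j.succ)) := by
      intro a y
      rw [hFdef]
      simp only [Fin.prod_univ_succ, Fin.cons_zero, ← Fin.succ_last, Fin.cons_succ,
        Fin.castSucc_zero, ← Fin.succ_castSucc, Fin.val_succ, Fin.val_zero]
      ring
    have hmid : Measurable fun y : Fin (n + 1) → ℝ =>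
        (fun b => ∫⁻ a, Φ 0 a b ∂(m 0)) (y 0) * G (y (Fin.last n)) *
          ∏ j : Fin n, Φ ((j : ℕ) + 1) (y j.castSucc) (y j.succ) :=
      ((hH'anti.measurable.comp (measurable_pi_apply _)).mul
        (hG.measurable.comp (measurable_pi_apply _))).mul hPmeas
    have inner_bound : ∀ y : Fin (n + 1) → ℝ,
        ∫⁻ a, F (Fin.cons a y) ∂(m 0) ≤ (∫⁻ a, H a ∂(m 0)) *
          ((fun b => ∫⁻ a, Φ 0 a b ∂(m 0)) (y 0) * G (y (Fin.last n)) *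
            ∏ j : Fin n, Φ ((j : ℕ) + 1) (y j.castSucc) (y j.succ)) := by
      intro y
      calc ∫⁻ a, F (Fin.cons a y) ∂(m 0)
          = (∫⁻ a, Φ 0 a (y 0) * H a ∂(m 0)) * (G (y (Fin.last n)) *
              ∏ j : Fin n, Φ ((j : ℕ) + 1) (y j.castSucc) (y j.succ)) := by
            simp only [hcons_eval, mul_comm (H _) (Φ 0 _ _)]
            exact lintegral_mul_const _ ((hΦ1 0 (y 0)).measurable.mul hH.measurable)
        _ ≤ ((∫⁻ a, Φ 0 a (y 0) ∂(m 0)) * ∫⁻ a, H a ∂(m 0)) * (G (y (Fin.last n)) *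
              ∏ j : Fin n, Φ ((j : ℕ) + 1) (y j.castSucc) (y j.succ)) :=
            mul_le_mul_left (cheby (hΦ1 0 (y 0)) hH) _
        _ = (∫⁻ a, H a ∂(m 0)) *
            ((fun b => ∫⁻ a, Φ 0 a b ∂(m 0)) (y 0) * G (y (Fin.last n)) *
              ∏ j : Fin n, Φ ((j : ℕ) + 1) (y j.castSucc) (y j.succ)) := by ring
    rw [key]
    have IHa := IH (fun i => m (i + 1)) (fun i => hm _) (fun i => Φ (i + 1))
      (fun i => hΦm _) (fun i => hΦ1 _) (fun i => hΦ2 _)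
      (fun b => ∫⁻ a, Φ 0 a b ∂(m 0)) G hH'anti hG
    have hswap : ∫⁻ b, ∫⁻ a, Φ 0 a b ∂(m 0) ∂(m 1)
        = ∫⁻ a, ∫⁻ b, Φ 0 a b ∂(m 1) ∂(m 0) :=
      (lintegral_lintegral_swap (hΦm 0).aemeasurable).symm
    calc ∫⁻ y, ∫⁻ a, F (Fin.cons a y) ∂(m 0)
            ∂(Measure.pi fun j : Fin (n + 1) => m ((j : ℕ) + 1))
        ≤ ∫⁻ y, (∫⁻ a, H a ∂(m 0)) *
            ((fun b => ∫⁻ a, Φ 0 a b ∂(m 0)) (y 0) * G (y (Fin.last n)) *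
              ∏ j : Fin n, Φ ((j : ℕ) + 1) (y j.castSucc) (y j.succ))
            ∂(Measure.pi fun j : Fin (n + 1) => m ((j : ℕ) + 1)) :=
          lintegral_mono inner_bound
      _ = (∫⁻ a, H a ∂(m 0)) * ∫⁻ y,
            ((fun b => ∫⁻ a, Φ 0 a b ∂(m 0)) (y 0) * G (y (Fin.last n)) *
              ∏ j : Fin n, Φ ((j : ℕ) + 1) (y j.castSucc) (y j.succ))
            ∂(Measure.pi fun j : Fin (n + 1) => m ((j : ℕ) + 1)) :=
          lintegral_const_mul _ hmid
      _ ≤ (∫⁻ a, H a ∂(m 0)) *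
            ((∫⁻ a, (fun b => ∫⁻ a', Φ 0 a' b ∂(m 0)) a ∂(m (0 + 1))) *
              (∫⁻ a, G a ∂(m (n + 1))) *
              ∏ j : Fin n, ∫⁻ a, ∫⁻ b, Φ ((j : ℕ) + 1) a b
                ∂(m ((j : ℕ) + 1 + 1)) ∂(m ((j : ℕ) + 1))) :=
          mul_le_mul_right IHa _
      _ = (∫⁻ a, H a ∂(m 0)) * (∫⁻ a, G a ∂(m (n + 1))) *
            ∏ j : Fin (n + 1), ∫⁻ a, ∫⁻ b, Φ (j : ℕ) a b
              ∂(m ((j : ℕ) + 1)) ∂(m (j : ℕ)) := by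
          rw [Fin.prod_univ_succ]
          simp only [Fin.val_succ, Fin.val_zero, zero_add]
          rw [hswap]
          ring


open ProbabilityTheory Fin.NatCast in
theorem cyclic_measurable {Ω : Type*} [MeasurableSpace Ω] (μ : Measure Ω)
    [IsProbabilityMeasure μ] (K : ℕ) [NeZero K] (X : Fin K → Ω → ℝ)
    (hmeas : ∀ i, Measurable (X i))
    (hindep : ProbabilityTheory.iIndepFun (m := fun _ => Real.measurableSpace) X μ)
    (Φ : Fin K → ℝ → ℝ → ℝ≥0∞)
    (hΦm : ∀ i, Measurable (Function.uncurry (Φ i)))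
    (hΦ1 : ∀ i b, Monotone fun a => Φ i a b)
    (hΦ2 : ∀ i a, Antitone (Φ i a)) :
    ∫⁻ ω, ∏ i, Φ i (X i ω) (X (i + 1) ω) ∂μ ≤
      ∏ i, ∫⁻ ω, Φ i (X i ω) (X (i + 1) ω) ∂μ := by
  rcases K with _ | K
  · exact absurd rfl (NeZero.ne 0)
  rcases K with _ | n
  · -- K = 1
    simp only [Fin.prod_univ_succ, Fin.prod_univ_zero, mul_one]
    exact le_of_eq rfl
  -- K = n + 2
  set ν : Fin (n + 2) → Measure ℝ := fun i => μ.map (X i) with hν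
  haveI : ∀ i, IsProbabilityMeasure (ν i) :=
    fun i => Measure.isProbabilityMeasure_map (hmeas i).aemeasurable
  have hXmeas : Measurable fun ω (i : Fin (n + 2)) => X i ω :=
    measurable_pi_iff.2 hmeas
  -- joint law is the product measure
  have hpi : μ.map (fun ω (i : Fin (n + 2)) => X i ω) = Measure.pi ν := by
    refine (Measure.pi_eq fun s hs => ?_).symm
    rw [Measure.map_apply hXmeas (MeasurableSet.univ_pi hs)]
    have hpre : (fun ω (i : Fin (n + 2)) => X i ω) ⁻¹' Set.pi Set.univ s
        = ⋂ i ∈ Finset.univ, X i ⁻¹' s i := by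
      ext ω
      simp [Set.mem_pi]
    rw [hpre, hindep.measure_inter_preimage_eq_mul Finset.univ (fun i _ => hs i)]
    exact Finset.prod_congr rfl fun i _ =>
      (Measure.map_apply (hmeas i) (hs i)).symm
  -- identify each factor on the right
  have hfac : ∀ i : Fin (n + 2), ∫⁻ ω, Φ i (X i ω) (X (i + 1) ω) ∂μ
      = ∫⁻ a, ∫⁻ b, Φ i a b ∂(ν (i + 1)) ∂(ν i) := by
    intro i
    have hii : i ≠ i + 1 := by
      intro h
      have h1 : i + 0 = i + 1 := by rw [add_zero]; exact h
      have : (0 : Fin (n + 2)) = 1 := add_left_cancel h1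
      simp at this
    have hmap : μ.map (fun ω => (X i ω, X (i + 1) ω)) = (ν i).prod (ν (i + 1)) :=
      (indepFun_iff_map_prod_eq_prod_map_map (hmeas i).aemeasurable
        (hmeas (i + 1)).aemeasurable).1 (hindep.indepFun hii)
    calc ∫⁻ ω, Φ i (X i ω) (X (i + 1) ω) ∂μ
        = ∫⁻ p, Function.uncurry (Φ i) p ∂(μ.map fun ω => (X i ω, X (i + 1) ω)) :=
          (lintegral_map (hΦm i) ((hmeas i).prodMk (hmeas (i + 1)))).symm
      _ = ∫⁻ p, Function.uncurry (Φ i) p ∂((ν i).prod (ν (i + 1))) := by rw [hmap]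
      _ = ∫⁻ a, ∫⁻ b, Φ i a b ∂(ν (i + 1)) ∂(ν i) :=
          lintegral_prod _ (hΦm i).aemeasurable
  -- the cyclic integrand on the product space
  set Fc : (Fin (n + 2) → ℝ) → ℝ≥0∞ := fun x =>
    ∏ i : Fin (n + 2), Φ i (x i) (x (i + 1)) with hFcdef
  have hFcmeas : Measurable Fc :=
    Finset.measurable_prod _ fun i _ => meas_pair (hΦm i) _ _
  have hLHS : ∫⁻ ω, ∏ i, Φ i (X i ω) (X (i + 1) ω) ∂μ
      = ∫⁻ x, Fc x ∂(Measure.pi ν) := by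
    rw [← hpi]
    exact (lintegral_map hFcmeas hXmeas).symm
  rw [hLHS]
  rw [Finset.prod_congr rfl fun i (_ : i ∈ Finset.univ) => hfac i]
  -- cast bookkeeping lemmas
  have hcast1 : ∀ j : Fin (n + 1), (((j : ℕ) + 1 : ℕ) : Fin (n + 2)) = j.succ := by
    intro j
    apply Fin.ext
    rw [Fin.val_cast_of_lt (by omega)]
    rfl
  have hcastA : ∀ j : Fin n, (((j : ℕ) + 1 : ℕ) : Fin (n + 2)) = j.castSucc.succ := by
    intro j
    apply Fin.ext
    rw [Fin.val_cast_of_lt (by omega)]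
    rfl
  have hcastB : ∀ j : Fin n, (((j : ℕ) + 1 + 1 : ℕ) : Fin (n + 2)) = j.succ.succ := by
    intro j
    apply Fin.ext
    rw [Fin.val_cast_of_lt (by omega)]
    rfl
  have hcastn : ((n + 1 : ℕ) : Fin (n + 2)) = (Fin.last n).succ := by
    apply Fin.ext
    rw [Fin.val_cast_of_lt (by omega)]
    rfl
  have hcast0 : ((0 + 1 : ℕ) : Fin (n + 2)) = 1 := by norm_num
  -- head and tail functions
  set H : ℝ → ℝ≥0∞ := fun b => ∫⁻ a, Φ 0 a b ∂(ν 0) with hHdef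
  set G : ℝ → ℝ≥0∞ := fun b => ∫⁻ a, Φ ((Fin.last n).succ) b a ∂(ν 0) with hGdef
  have hH : Antitone H := fun b1 b2 h => lintegral_mono fun a => hΦ2 0 a h
  have hG : Monotone G := fun b1 b2 h => lintegral_mono fun a => hΦ1 _ a h
  -- peel off coordinate 0
  have MP := (measurePreserving_piFinSuccAbove ν 0).symm
  simp only [Fin.succAbove_zero] at MP
  have hconsm : Measurable
      (fun z : ℝ × (Fin (n + 1) → ℝ) => (Fin.cons z.1 z.2 : Fin (n + 2) → ℝ)) := by
    refine measurable_pi_iff.2 fun i => ?_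
    refine Fin.cases ?_ (fun j => ?_) i
    · simpa using measurable_fst
    · simpa [Function.comp_def] using (measurable_pi_apply j).comp measurable_snd
  have hsymm : ∀ z : ℝ × (Fin (n + 1) → ℝ),
      (MeasurableEquiv.piFinSuccAbove (fun _ : Fin (n + 2) => ℝ) 0).symm z
        = Fin.cons z.1 z.2 := by
    intro z
    rw [MeasurableEquiv.piFinSuccAbove_symm_apply]
    simp only [Fin.insertNthEquiv_zero]
    rfl
  have key : ∫⁻ x, Fc x ∂(Measure.pi ν)
      = ∫⁻ y, ∫⁻ a, Fc (Fin.cons a y) ∂(ν 0)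
          ∂(Measure.pi fun j : Fin (n + 1) => ν j.succ) := by
    calc ∫⁻ x, Fc x ∂(Measure.pi ν)
        = ∫⁻ z, Fc ((MeasurableEquiv.piFinSuccAbove (fun _ : Fin (n + 2) => ℝ) 0).symm z)
            ∂((ν 0).prod (Measure.pi fun j : Fin (n + 1) => ν j.succ)) :=
          (MP.lintegral_comp hFcmeas).symm
      _ = ∫⁻ z, Fc (Fin.cons z.1 z.2)
            ∂((ν 0).prod (Measure.pi fun j : Fin (n + 1) => ν j.succ)) :=
          lintegral_congr fun z => by rw [hsymm]
      _ = ∫⁻ y, ∫⁻ a, Fc (Fin.cons a y) ∂(ν 0)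
            ∂(Measure.pi fun j : Fin (n + 1) => ν j.succ) :=
          lintegral_prod_symm _ (hFcmeas.comp hconsm).aemeasurable
  -- evaluate the integrand on a cons
  have hcons_eval : ∀ (a : ℝ) (y : Fin (n + 1) → ℝ), Fc (Fin.cons a y)
      = (Φ 0 a (y 0) * Φ ((Fin.last n).succ) (y (Fin.last n)) a) *
          ∏ j : Fin n, Φ (j.castSucc.succ) (y j.castSucc) (y j.succ) := by
    intro a y
    have hC : (Fin.cons a y : Fin (n + 2) → ℝ) ((0 : Fin (n + 2)) + 1) = y 0 := by
      rw [zero_add, ← Fin.succ_zero_eq_one, Fin.cons_succ]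
    have hD : (Fin.cons a y : Fin (n + 2) → ℝ) ((Fin.last n).succ + 1) = a := by
      rw [Fin.succ_last, Fin.last_add_one, Fin.cons_zero]
    have hE : ∀ j : Fin n, (Fin.cons a y : Fin (n + 2) → ℝ) (j.castSucc.succ + 1)
        = y j.succ := by
      intro j
      rw [Fin.succ_castSucc, Fin.coeSucc_eq_succ, Fin.cons_succ]
    simp only [hFcdef]
    rw [Fin.prod_univ_succ, Fin.prod_univ_castSucc]
    simp only [hC, hD, hE, Fin.cons_succ, Fin.cons_zero]
    ring
  -- middle product measurability
  have hPmeas : Measurable fun y : Fin (n + 1) → ℝ =>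
      ∏ j : Fin n, Φ (j.castSucc.succ) (y j.castSucc) (y j.succ) :=
    Finset.measurable_prod _ fun j _ => meas_pair (hΦm _) _ _
  -- integrate out coordinate 0, using the two-function inequality
  have inner_bound : ∀ y : Fin (n + 1) → ℝ,
      ∫⁻ a, Fc (Fin.cons a y) ∂(ν 0) ≤ H (y 0) * G (y (Fin.last n)) *
        ∏ j : Fin n, Φ (j.castSucc.succ) (y j.castSucc) (y j.succ) := by
    intro y
    calc ∫⁻ a, Fc (Fin.cons a y) ∂(ν 0)
        = (∫⁻ a, Φ 0 a (y 0) * Φ ((Fin.last n).succ) (y (Fin.last n)) a ∂(ν 0)) *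
            ∏ j : Fin n, Φ (j.castSucc.succ) (y j.castSucc) (y j.succ) := by
          simp only [hcons_eval]
          exact lintegral_mul_const _
            ((hΦ1 0 (y 0)).measurable.mul (hΦ2 _ (y (Fin.last n))).measurable)
      _ ≤ (H (y 0) * G (y (Fin.last n))) *
            ∏ j : Fin n, Φ (j.castSucc.succ) (y j.castSucc) (y j.succ) :=
          mul_le_mul_left (cheby (hΦ1 0 (y 0)) (hΦ2 _ (y (Fin.last n)))) _
      _ = H (y 0) * G (y (Fin.last n)) *
            ∏ j : Fin n, Φ (j.castSucc.succ) (y j.castSucc) (y j.succ) := by ring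
  -- apply the chain lemma
  have chain := chain_lemma n (fun k => ν ((k + 1 : ℕ) : Fin (n + 2)))
    (fun k => by exact inferInstance)
    (fun k => Φ ((k + 1 : ℕ) : Fin (n + 2))) (fun k => hΦm _)
    (fun k => hΦ1 _) (fun k => hΦ2 _) H G hH hG
  beta_reduce at chain
  rw [show (fun i : Fin (n + 1) => ν (((i : ℕ) + 1 : ℕ) : Fin (n + 2)))
      = fun j : Fin (n + 1) => ν j.succ from funext fun i => congrArg ν (hcast1 i)] at chain
  simp only [hcastA, hcastB, hcastn, hcast0, Nat.cast_one] at chain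
  -- final identification of the right-hand side
  have hswap : ∫⁻ b, ∫⁻ a, Φ 0 a b ∂(ν 0) ∂(ν 1)
      = ∫⁻ a, ∫⁻ b, Φ 0 a b ∂(ν 1) ∂(ν 0) :=
    (lintegral_lintegral_swap (hΦm 0).aemeasurable).symm
  calc ∫⁻ x, Fc x ∂(Measure.pi ν)
      = ∫⁻ y, ∫⁻ a, Fc (Fin.cons a y) ∂(ν 0)
          ∂(Measure.pi fun j : Fin (n + 1) => ν j.succ) := key
    _ ≤ ∫⁻ y, (H (y 0) * G (y (Fin.last n)) *
          ∏ j : Fin n, Φ (j.castSucc.succ) (y j.castSucc) (y j.succ))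
          ∂(Measure.pi fun j : Fin (n + 1) => ν j.succ) := lintegral_mono inner_bound
    _ ≤ (∫⁻ a, H a ∂(ν 1)) * (∫⁻ a, G a ∂(ν ((Fin.last n).succ))) *
          ∏ j : Fin n, ∫⁻ a, ∫⁻ b, Φ (j.castSucc.succ) a b
            ∂(ν j.succ.succ) ∂(ν (j.castSucc.succ)) := chain
    _ = ∏ i : Fin (n + 2), ∫⁻ a, ∫⁻ b, Φ i a b ∂(ν (i + 1)) ∂(ν i) := by
        rw [Fin.prod_univ_succ, Fin.prod_univ_castSucc]
        have e1 : ∫⁻ a, H a ∂(ν 1) = ∫⁻ a, ∫⁻ b, Φ 0 a b ∂(ν (0 + 1)) ∂(ν 0) := by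
          rw [hHdef, zero_add]
          exact hswap
        have e2 : ∫⁻ a, G a ∂(ν ((Fin.last n).succ))
            = ∫⁻ a, ∫⁻ b, Φ ((Fin.last n).succ) a b
                ∂(ν ((Fin.last n).succ + 1)) ∂(ν ((Fin.last n).succ)) := by
          rw [hGdef, Fin.succ_last, Fin.last_add_one]
        have e3 : ∀ j : Fin n, (∫⁻ a, ∫⁻ b, Φ (j.castSucc.succ) a b
              ∂(ν j.succ.succ) ∂(ν (j.castSucc.succ)))
            = ∫⁻ a, ∫⁻ b, Φ (j.castSucc.succ) a b
              ∂(ν (j.castSucc.succ + 1)) ∂(ν (j.castSucc.succ)) := by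
          intro j
          rw [Fin.succ_castSucc, Fin.coeSucc_eq_succ]
        rw [e1, e2, Finset.prod_congr rfl fun j (_ : j ∈ Finset.univ) => e3 j]
        ring



-- countable set whose singletons are null is null
lemma countable_null {α : Type*} [MeasurableSpace α] (μ : Measure α) {C : Set α}
    (hC : C.Countable) (h : ∀ x ∈ C, μ {x} = 0) : μ C = 0 := by
  have : C = ⋃ x ∈ C, {x} := by simp
  rw [this]
  exact (measure_biUnion_null_iff hC).2 h

-- atoms are countable
lemma countable_atoms (ν : Measure ℝ) [IsFiniteMeasure ν] : {x : ℝ | ν {x} ≠ 0}.Countable := by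
  have h := MeasureTheory.Measure.countable_meas_pos_of_disjoint_iUnion₀ (μ := ν)
    (As := fun x : ℝ => {x}) (fun x => (measurableSet_singleton x).nullMeasurableSet)
    (fun x y hxy => (Set.disjoint_singleton.2 hxy).aedisjoint)
  refine h.mono fun x hx => ?_
  simpa [pos_iff_ne_zero] using hx

-- a set of reals with no three ordered elements is contained in a pair
lemma subset_pair_of_no_middle {S : Set ℝ}
    (h : ∀ y₁ ∈ S, ∀ y₂ ∈ S, ∀ y₃ ∈ S, y₁ < y₂ → y₂ < y₃ → False) :
    ∃ a b : ℝ, S ⊆ {a, b} := by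
  by_cases hS : S.Nonempty
  · obtain ⟨a, ha⟩ := hS
    by_cases h2 : ∃ b ∈ S, b ≠ a
    · obtain ⟨b, hb, hba⟩ := h2
      refine ⟨a, b, fun c hc => ?_⟩
      by_contra hcon
      simp only [Set.mem_insert_iff, Set.mem_singleton_iff, not_or] at hcon
      obtain ⟨hca, hcb⟩ := hcon
      -- a, b, c distinct elements of S : derive contradiction
      rcases lt_trichotomy a b with h1 | h1 | h1
      · rcases lt_trichotomy c a with h3 | h3 | h3
        · exact h c hc a ha b hb h3 h1
        · exact hca h3
        · rcases lt_trichotomy c b with h4 | h4 | h4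
          · exact h a ha c hc b hb h3 h4
          · exact hcb h4
          · exact h a ha b hb c hc h1 h4
      · exact absurd h1.symm hba
      · rcases lt_trichotomy c b with h3 | h3 | h3
        · exact h c hc b hb a ha h3 h1
        · exact hcb h3
        · rcases lt_trichotomy c a with h4 | h4 | h4
          · exact h b hb c hc a ha h3 h4
          · exact hca h4
          · exact h b hb a ha c hc h1 h4
    · push_neg at h2
      exact ⟨a, a, fun c hc => by simp [h2 c hc]⟩
  · exact ⟨0, 0, fun c hc => absurd ⟨c, hc⟩ hS⟩

-- the staircase null lemma
lemma staircase_null (ν₁ ν₂ : Measure ℝ) [IsFiniteMeasure ν₁] [IsFiniteMeasure ν₂]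
    (S : Set (ℝ × ℝ)) (hSm : MeasurableSet S)
    (hanti : ∀ p ∈ S, ∀ q ∈ S, (p : ℝ × ℝ).1 < (q : ℝ × ℝ).1 → q.2 ≤ p.2)
    (hA1 : ∀ p ∈ S, ν₁ {(p : ℝ × ℝ).1} = 0) (hA2 : ∀ p ∈ S, ν₂ {(p : ℝ × ℝ).2} = 0) :
    ν₁.prod ν₂ S = 0 := by
  set T : ℝ → Set ℝ := fun x => Prod.mk x ⁻¹' S with hT
  set O : ℝ → Set ℝ := fun x => ⋃ y₁ ∈ T x, ⋃ y₂ ∈ T x, Set.Ioo y₁ y₂ with hO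
  have hOopen : ∀ x, IsOpen (O x) :=
    fun x => isOpen_biUnion fun y₁ _ => isOpen_biUnion fun y₂ _ => isOpen_Ioo
  have hdisj : Pairwise (Function.onFun Disjoint O) := by
    intro x₁ x₂ hne
    wlog hlt : x₁ < x₂ generalizing x₁ x₂
    · exact (this hne.symm ((hne.lt_or_gt).resolve_left hlt)).symm
    rw [Function.onFun_apply, Set.disjoint_left]
    rintro y hy1 hy2
    simp only [hO, Set.mem_iUnion] at hy1 hy2
    obtain ⟨y₁, hy₁, y₂, hy₂, hyin⟩ := hy1
    obtain ⟨y₁', hy₁', y₂', hy₂', hyin'⟩ := hy2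
    have := hanti (x₁, y₁) hy₁ (x₂, y₂') hy₂' hlt
    exact absurd (lt_of_lt_of_le (lt_trans hyin.1 hyin'.2) this) (lt_irrefl y₁)
  have hslice : ∀ x, ν₂ (T x) ≤ ν₂ (O x) := by
    intro x
    have hsub : T x ⊆ O x ∪ (T x \ O x) := fun y hy => by
      by_cases h : y ∈ O x
      · exact Or.inl h
      · exact Or.inr ⟨hy, h⟩
    have hno3 : ∀ y₁ ∈ T x \ O x, ∀ y₂ ∈ T x \ O x, ∀ y₃ ∈ T x \ O x,
        y₁ < y₂ → y₂ < y₃ → False := by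
      intro y₁ h₁ y₂ h₂ y₃ h₃ h12 h23
      apply h₂.2
      simp only [hO, Set.mem_iUnion]
      exact ⟨y₁, h₁.1, y₃, h₃.1, h12, h23⟩
    obtain ⟨a, b, hab⟩ := subset_pair_of_no_middle hno3
    have hsingle : ∀ c : ℝ, ν₂ ({c} ∩ T x) = 0 := by
      intro c
      by_cases hc : c ∈ T x
      · exact measure_mono_null (Set.inter_subset_left) (hA2 (x, c) hc)
      · have : {c} ∩ T x = ∅ := by
          ext z
          simp only [Set.mem_inter_iff, Set.mem_singleton_iff, Set.mem_empty_iff_false,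
            iff_false, not_and]
          rintro rfl
          exact hc
        simp [this]
    have hdiff : ν₂ (T x \ O x) = 0 := by
      have : T x \ O x ⊆ ({a} ∩ T x) ∪ ({b} ∩ T x) := by
        intro y hy
        rcases hab hy with h | h
        · exact Or.inl ⟨h, hy.1⟩
        · exact Or.inr ⟨h, hy.1⟩
      exact measure_mono_null this (by
        refine le_antisymm ?_ (zero_le)
        calc ν₂ (({a} ∩ T x) ∪ ({b} ∩ T x)) ≤ ν₂ ({a} ∩ T x) + ν₂ ({b} ∩ T x) :=
          measure_union_le _ _
        _ = 0 := by rw [hsingle a, hsingle b, add_zero])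
    calc ν₂ (T x) ≤ ν₂ (O x ∪ (T x \ O x)) := measure_mono hsub
      _ ≤ ν₂ (O x) + ν₂ (T x \ O x) := measure_union_le _ _
      _ = ν₂ (O x) := by rw [hdiff, add_zero]
  have hCcount : {x : ℝ | 0 < ν₂ (O x)}.Countable :=
    MeasureTheory.Measure.countable_meas_pos_of_disjoint_iUnion₀
      (fun x => (hOopen x).measurableSet.nullMeasurableSet)
      (fun x y hxy => (hdisj hxy).aedisjoint)
  rw [Measure.prod_apply hSm]
  have hae : ∀ᵐ x ∂ν₁, ν₂ (Prod.mk x ⁻¹' S) = 0 := by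
    rw [ae_iff]
    refine measure_mono_null (t := {x : ℝ | 0 < ν₂ (O x)}) ?_ ?_
    · intro x hx
      simp only [Set.mem_setOf_eq] at hx ⊢
      by_contra hcon
      simp only [not_lt, nonpos_iff_eq_zero] at hcon
      exact hx (le_antisymm (le_trans (hslice x) (le_of_eq hcon)) (zero_le))
    · refine countable_null _ hCcount fun x hx => ?_
      simp only [Set.mem_setOf_eq] at hx
      have : (T x).Nonempty := by
        by_contra hcon
        rw [Set.not_nonempty_iff_eq_empty] at hcon
        have : O x = ∅ := by
          simp [hO, hcon]
        rw [this] at hx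
        simp at hx
      obtain ⟨y, hy⟩ := this
      exact hA1 (x, y) hy
  calc ∫⁻ x, ν₂ (Prod.mk x ⁻¹' S) ∂ν₁ = ∫⁻ _, 0 ∂ν₁ := lintegral_congr_ae hae
    _ = 0 := lintegral_zero

-- jump points of a monotone function are countable
lemma jump_countable (g : ℝ → ℝ) (hg : Monotone g) :
    {y : ℝ | ∃ c : ℚ, (∀ z < y, g z ≤ c) ∧ (c : ℝ) < g y}.Countable := by
  have : {y : ℝ | ∃ c : ℚ, (∀ z < y, g z ≤ c) ∧ (c : ℝ) < g y}
      = ⋃ c : ℚ, {y : ℝ | (∀ z < y, g z ≤ c) ∧ (c : ℝ) < g y} := by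
    ext y
    simp
  rw [this]
  refine Set.countable_iUnion fun c => Set.Subsingleton.countable ?_
  intro y₁ h₁ y₂ h₂
  by_contra hne
  rcases Ne.lt_or_gt hne with h | h
  · exact absurd (h₂.1 y₁ h) (not_le.2 h₁.2)
  · exact absurd (h₁.1 y₂ h) (not_le.2 h₂.2)


lemma exists_modification (ν₁ ν₂ : Measure ℝ) [IsProbabilityMeasure ν₁]
    [IsProbabilityMeasure ν₂] (f : ℝ → ℝ → ℝ)
    (hm1 : ∀ y, Monotone fun x => f x y) (hm2 : ∀ x, Monotone (f x)) :
    ∃ F : ℝ → ℝ → ℝ≥0∞, Measurable (Function.uncurry F) ∧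
      (∀ b, Monotone fun a => F a b) ∧ (∀ a, Monotone (F a)) ∧
      ∀ᵐ p ∂(ν₁.prod ν₂), F p.1 p.2 = ENNReal.ofReal (f p.1 p.2) := by
  classical
  set A₁ : Set ℝ := {x | ν₁ {x} ≠ 0} with hA₁
  set A₂ : Set ℝ := {y | ν₂ {y} ≠ 0} with hA₂
  have hA₁c : A₁.Countable := countable_atoms ν₁
  have hA₂c : A₂.Countable := countable_atoms ν₂
  set Q₁ : Set ℝ := A₁ ∪ Set.range (fun q : ℚ => (q : ℝ)) with hQ₁
  set Q₂ : Set ℝ := A₂ ∪ Set.range (fun q : ℚ => (q : ℝ)) with hQ₂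
  have hQ₁c : Q₁.Countable := hA₁c.union (Set.countable_range _)
  have hQ₂c : Q₂.Countable := hA₂c.union (Set.countable_range _)
  have hQ₁ne : Q₁.Nonempty := ⟨(0 : ℚ), Or.inr ⟨0, rfl⟩⟩
  have hQ₂ne : Q₂.Nonempty := ⟨(0 : ℚ), Or.inr ⟨0, rfl⟩⟩
  obtain ⟨q₁, hq₁⟩ := hQ₁c.exists_eq_range hQ₁ne
  obtain ⟨q₂, hq₂⟩ := hQ₂c.exists_eq_range hQ₂ne
  have hratQ₁ : ∀ q : ℚ, ∃ i, q₁ i = (q : ℝ) := by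
    intro q
    have : (q : ℝ) ∈ Q₁ := Or.inr ⟨q, rfl⟩
    rw [hq₁] at this
    obtain ⟨i, hi⟩ := this
    exact ⟨i, hi⟩
  have hratQ₂ : ∀ q : ℚ, ∃ i, q₂ i = (q : ℝ) := by
    intro q
    have : (q : ℝ) ∈ Q₂ := Or.inr ⟨q, rfl⟩
    rw [hq₂] at this
    obtain ⟨i, hi⟩ := this
    exact ⟨i, hi⟩
  -- the modification
  set F : ℝ → ℝ → ℝ≥0∞ := fun a b => ⨆ k : ℕ × ℕ,
    if q₁ k.1 ≤ a ∧ q₂ k.2 ≤ b then ENNReal.ofReal (f (q₁ k.1) (q₂ k.2)) else 0 with hF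
  have hFmeas : Measurable (Function.uncurry F) := by
    refine Measurable.iSup fun k => ?_
    have : MeasurableSet {p : ℝ × ℝ | q₁ k.1 ≤ p.1 ∧ q₂ k.2 ≤ p.2} :=
      ((measurableSet_Ici.preimage measurable_fst).inter
        (measurableSet_Ici.preimage measurable_snd))
    exact Measurable.ite this measurable_const measurable_const
  have hF1 : ∀ b, Monotone fun a => F a b := by
    intro b a₁ a₂ h
    refine iSup_mono fun k => ?_
    by_cases hk : q₁ k.1 ≤ a₁ ∧ q₂ k.2 ≤ b
    · rw [if_pos hk, if_pos ⟨le_trans hk.1 h, hk.2⟩]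
    · rw [if_neg hk]
      exact zero_le
  have hF2 : ∀ a, Monotone (F a) := by
    intro a b₁ b₂ h
    refine iSup_mono fun k => ?_
    by_cases hk : q₁ k.1 ≤ a ∧ q₂ k.2 ≤ b₁
    · rw [if_pos hk, if_pos ⟨hk.1, le_trans hk.2 h⟩]
    · rw [if_neg hk]
      exact zero_le
  have hle : ∀ a b, F a b ≤ ENNReal.ofReal (f a b) := by
    intro a b
    refine iSup_le fun k => ?_
    by_cases hk : q₁ k.1 ≤ a ∧ q₂ k.2 ≤ b
    · rw [if_pos hk]
      exact ENNReal.ofReal_le_ofReal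
        (le_trans (hm1 (q₂ k.2) hk.1) (hm2 a hk.2))
    · rw [if_neg hk]
      exact zero_le
  have hterm : ∀ (i j : ℕ) a b, q₁ i ≤ a → q₂ j ≤ b →
      ENNReal.ofReal (f (q₁ i) (q₂ j)) ≤ F a b := by
    intro i j a b hi hj
    have := le_iSup (fun k : ℕ × ℕ =>
      if q₁ k.1 ≤ a ∧ q₂ k.2 ≤ b then ENNReal.ofReal (f (q₁ k.1) (q₂ k.2)) else 0) (i, j)
    rwa [if_pos ⟨hi, hj⟩] at this
  refine ⟨F, hFmeas, hF1, hF2, ?_⟩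
  -- bad set analysis
  set Jx : ℝ → Set ℝ := fun x =>
    {y | ∃ c : ℚ, (∀ z < y, f x z ≤ c) ∧ (c : ℝ) < f x y} with hJx
  set Jy : ℝ → Set ℝ := fun y =>
    {x | ∃ c : ℚ, (∀ z < x, f z y ≤ c) ∧ (c : ℝ) < f x y} with hJy
  set E₂ : Set (ℝ × ℝ) := ⋃ x ∈ Q₁, {x} ×ˢ (Jx x \ A₂) with hE₂
  set E₁ : Set (ℝ × ℝ) := ⋃ y ∈ Q₂, (Jy y \ A₁) ×ˢ {y} with hE₁
  set D : ℚ → Set (ℝ × ℝ) := fun c =>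
    ({p : ℝ × ℝ | ∀ u v : ℚ, (u : ℝ) < p.1 → (v : ℝ) < p.2 → f u v ≤ c} ∩
      {p : ℝ × ℝ | ∀ u v : ℚ, p.1 < u → p.2 < v → (c : ℝ) < f u v}) ∩
      ((A₁ᶜ) ×ˢ (A₂ᶜ)) with hD
  have hE₂c : E₂.Countable :=
    hQ₁c.biUnion fun x _ =>
      (Set.countable_singleton x).prod (((jump_countable _ (hm2 x)).mono Set.diff_subset))
  have hE₁c : E₁.Countable :=
    hQ₂c.biUnion fun y _ =>
      (((jump_countable _ fun a b h => hm1 y h).mono Set.diff_subset).prod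
        (Set.countable_singleton y))
  have hE₂null : ν₁.prod ν₂ E₂ = 0 := by
    refine countable_null _ hE₂c fun p hp => ?_
    simp only [hE₂, Set.mem_iUnion, Set.mem_prod, Set.mem_singleton_iff] at hp
    obtain ⟨x, hx, hp1, hp2⟩ := hp
    have : {p} = ({p.1} : Set ℝ) ×ˢ ({p.2} : Set ℝ) := by
      ext z
      simp [Prod.ext_iff]
    rw [this, Measure.prod_prod]
    have : ν₂ {p.2} = 0 := by
      by_contra hcon
      exact hp2.2 hcon
    rw [this, mul_zero]
  have hE₁null : ν₁.prod ν₂ E₁ = 0 := by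
    refine countable_null _ hE₁c fun p hp => ?_
    simp only [hE₁, Set.mem_iUnion, Set.mem_prod, Set.mem_singleton_iff] at hp
    obtain ⟨y, hy, hp1, hp2⟩ := hp
    have : {p} = ({p.1} : Set ℝ) ×ˢ ({p.2} : Set ℝ) := by
      ext z
      simp [Prod.ext_iff]
    rw [this, Measure.prod_prod]
    have : ν₁ {p.1} = 0 := by
      by_contra hcon
      exact hp1.2 hcon
    rw [this, zero_mul]
  have hDm : ∀ c : ℚ, MeasurableSet (D c) := by
    intro c
    refine MeasurableSet.inter (MeasurableSet.inter ?_ ?_)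
      ((hA₁c.measurableSet.compl).prod (hA₂c.measurableSet.compl))
    · have : {p : ℝ × ℝ | ∀ u v : ℚ, (u : ℝ) < p.1 → (v : ℝ) < p.2 → f u v ≤ c}
          = ⋂ u : ℚ, ⋂ v : ℚ,
            (if f u v ≤ c then Set.univ else ({p : ℝ × ℝ | (u : ℝ) < p.1 ∧ (v : ℝ) < p.2})ᶜ) := by
        ext p
        simp only [Set.mem_setOf_eq, Set.mem_iInter]
        constructor
        · intro h u v
          split_ifs with hf
          · trivial
          · intro hcon
            exact hf (h u v hcon.1 hcon.2)
        · intro h u v hu hv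
          have := h u v
          split_ifs at this with hf
          · exact hf
          · exact absurd ⟨hu, hv⟩ this
      rw [this]
      refine MeasurableSet.iInter fun u => MeasurableSet.iInter fun v => ?_
      split_ifs
      · exact MeasurableSet.univ
      · exact (((measurableSet_Ioi.preimage measurable_fst).inter
          (measurableSet_Ioi.preimage measurable_snd))).compl
    · have : {p : ℝ × ℝ | ∀ u v : ℚ, p.1 < u → p.2 < v → (c : ℝ) < f u v}
          = ⋂ u : ℚ, ⋂ v : ℚ,
            (if (c : ℝ) < f u v then Set.univ else ({p : ℝ × ℝ | p.1 < u ∧ p.2 < v})ᶜ) := by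
        ext p
        simp only [Set.mem_setOf_eq, Set.mem_iInter]
        constructor
        · intro h u v
          split_ifs with hf
          · trivial
          · intro hcon
            exact hf (h u v hcon.1 hcon.2)
        · intro h u v hu hv
          have := h u v
          split_ifs at this with hf
          · exact hf
          · exact absurd ⟨hu, hv⟩ this
      rw [this]
      refine MeasurableSet.iInter fun u => MeasurableSet.iInter fun v => ?_
      split_ifs
      · exact MeasurableSet.univ
      · exact (((measurableSet_Iio.preimage measurable_fst).inter
          (measurableSet_Iio.preimage measurable_snd))).compl
  have hDnull : ∀ c : ℚ, ν₁.prod ν₂ (D c) = 0 := by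
    intro c
    refine staircase_null ν₁ ν₂ (D c) (hDm c) ?_ ?_ ?_
    · rintro p ⟨⟨hp1, hp2⟩, _⟩ q ⟨⟨hq1, hq2⟩, _⟩ hlt
      by_contra hcon
      push_neg at hcon
      obtain ⟨u, hu1, hu2⟩ := exists_rat_btwn hlt
      obtain ⟨v, hv1, hv2⟩ := exists_rat_btwn hcon
      exact absurd (hq1 u v hu2 hv2) (not_le.2 (hp2 u v hu1 hv1))
    · rintro p ⟨_, hp, _⟩
      simpa [hA₁] using hp
    · rintro p ⟨_, _, hp⟩
      simpa [hA₂] using hp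
  -- bad set containment
  have hbad : {p : ℝ × ℝ | F p.1 p.2 ≠ ENNReal.ofReal (f p.1 p.2)}
      ⊆ E₁ ∪ E₂ ∪ ⋃ c : ℚ, D c := by
    rintro ⟨a, b⟩ hp
    simp only [Set.mem_setOf_eq] at hp
    have hlt : F a b < ENNReal.ofReal (f a b) := lt_of_le_of_ne (hle a b) hp
    have hfin : F a b ≠ ⊤ := ne_top_of_lt (lt_of_lt_of_le hlt le_top)
    set r : ℝ := (F a b).toReal with hr
    have hr0 : 0 ≤ r := ENNReal.toReal_nonneg
    have hFr : F a b = ENNReal.ofReal r := (ENNReal.ofReal_toReal hfin).symm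
    have hfpos : 0 < f a b := by
      by_contra hcon
      push_neg at hcon
      rw [ENNReal.ofReal_eq_zero.2 hcon] at hlt
      exact absurd hlt (not_lt.2 (zero_le))
    have hrf : r < f a b := by
      rw [hFr] at hlt
      exact (ENNReal.ofReal_lt_ofReal_iff hfpos).1 hlt
    obtain ⟨c, hc1, hc2⟩ := exists_rat_btwn hrf
    have hub : ∀ (i j : ℕ), q₁ i ≤ a → q₂ j ≤ b → f (q₁ i) (q₂ j) ≤ r := by
      intro i j hi hj
      have := hterm i j a b hi hj
      rw [hFr] at this
      exact (ENNReal.ofReal_le_ofReal_iff hr0).1 this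
    by_cases ha : a ∈ Q₁
    · obtain ⟨i, hi⟩ : ∃ i, q₁ i = a := by
        rw [hq₁] at ha
        obtain ⟨i, hi⟩ := ha
        exact ⟨i, hi⟩
      by_cases hb : b ∈ Q₂
      · -- contradiction
        obtain ⟨j, hj⟩ : ∃ j, q₂ j = b := by
          rw [hq₂] at hb
          obtain ⟨j, hj⟩ := hb
          exact ⟨j, hj⟩
        exfalso
        have := hub i j (le_of_eq hi) (le_of_eq hj)
        rw [hi, hj] at this
        exact absurd this (not_le.2 hrf)
      · -- (a, b) ∈ E₂
        refine Or.inl (Or.inr ?_)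
        simp only [hE₂, Set.mem_iUnion, Set.mem_prod, Set.mem_singleton_iff]
        refine ⟨a, ha, rfl, ?_, fun hbA₂ => hb (Or.inl hbA₂)⟩
        refine ⟨c, fun z hz => ?_, hc2⟩
        obtain ⟨v, hv1, hv2⟩ := exists_rat_btwn hz
        obtain ⟨j, hj⟩ := hratQ₂ v
        have := hub i j (le_of_eq hi) (by rw [hj]; exact le_of_lt hv2)
        rw [hi, hj] at this
        calc f a z ≤ f a v := hm2 a (le_of_lt hv1)
          _ ≤ r := this
          _ ≤ c := le_of_lt hc1
    · by_cases hb : b ∈ Q₂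
      · -- (a, b) ∈ E₁
        obtain ⟨j, hj⟩ : ∃ j, q₂ j = b := by
          rw [hq₂] at hb
          obtain ⟨j, hj⟩ := hb
          exact ⟨j, hj⟩
        refine Or.inl (Or.inl ?_)
        simp only [hE₁, Set.mem_iUnion, Set.mem_prod, Set.mem_singleton_iff]
        refine ⟨b, hb, ⟨?_, fun haA₁ => ha (Or.inl haA₁)⟩, rfl⟩
        refine ⟨c, fun z hz => ?_, hc2⟩
        obtain ⟨u, hu1, hu2⟩ := exists_rat_btwn hz
        obtain ⟨i, hi⟩ := hratQ₁ u
        have := hub i j (by rw [hi]; exact le_of_lt hu2) (le_of_eq hj)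
        rw [hi, hj] at this
        calc f z b ≤ f u b := hm1 b (le_of_lt hu1)
          _ ≤ r := this
          _ ≤ c := le_of_lt hc1
      · -- (a, b) ∈ D c
        refine Or.inr (Set.mem_iUnion.2 ⟨c, ?_⟩)
        refine ⟨⟨?_, ?_⟩, fun haA₁ => ha (Or.inl haA₁), fun hbA₂ => hb (Or.inl hbA₂)⟩
        · intro u v hu hv
          obtain ⟨i, hi⟩ := hratQ₁ u
          obtain ⟨j, hj⟩ := hratQ₂ v
          have := hub i j (by rw [hi]; exact le_of_lt hu) (by rw [hj]; exact le_of_lt hv)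
          rw [hi, hj] at this
          exact le_trans this (le_of_lt hc1)
        · intro u v hu hv
          calc (c : ℝ) < f a b := hc2
            _ ≤ f u b := hm1 b (le_of_lt hu)
            _ ≤ f u v := hm2 u (le_of_lt hv)
  -- conclude
  have hN : ν₁.prod ν₂ (E₁ ∪ E₂ ∪ ⋃ c : ℚ, D c) = 0 := by
    refine measure_union_null (measure_union_null hE₁null hE₂null) ?_
    exact measure_iUnion_null hDnull
  rw [ae_iff]
  exact measure_mono_null (fun p hp => hbad hp) hN


/-- Cyclic product inequality: for independent `X₁,…,X_K` (with `X_{K+1} = X₁`) and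
component-wise increasing `fᵢ : ℝ² → [0,∞)`,
`E[∏ᵢ fᵢ(Xᵢ, −X_{i+1})] ≤ ∏ᵢ E[fᵢ(Xᵢ, −X_{i+1})]`. -/
theorem cyclic_product_inequality {Ω : Type*} [MeasurableSpace Ω] (μ : Measure Ω)
    [IsProbabilityMeasure μ] (K : ℕ) [NeZero K] (X : Fin K → Ω → ℝ)
    (hmeas : ∀ i, Measurable (X i))
    (hindep : ProbabilityTheory.iIndepFun (m := fun _ => Real.measurableSpace) X μ)
    (f : Fin K → ℝ → ℝ → ℝ)
    (hmono1 : ∀ i y, Monotone fun x => f i x y)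
    (hmono2 : ∀ i x, Monotone fun y => f i x y)
    (hnn : ∀ i x y, 0 ≤ f i x y) :
    ∫⁻ ω, ∏ i, ENNReal.ofReal (f i (X i ω) (-X (i + 1) ω)) ∂μ ≤
      ∏ i, ∫⁻ ω, ENNReal.ofReal (f i (X i ω) (-X (i + 1) ω)) ∂μ := by
  rcases K with _ | K
  · exact absurd rfl (NeZero.ne 0)
  rcases K with _ | n
  · simp only [Fin.prod_univ_succ, Fin.prod_univ_zero, mul_one]
    exact le_of_eq rfl
  -- K = n + 2
  have hne : ∀ i : Fin (n + 2), i ≠ i + 1 := by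
    intro i h
    have h1 : i + 0 = i + 1 := by rw [add_zero]; exact h
    have : (0 : Fin (n + 2)) = 1 := add_left_cancel h1
    simp at this
  set ν₁ : Fin (n + 2) → Measure ℝ := fun i => μ.map (X i) with hν₁
  set ν₂ : Fin (n + 2) → Measure ℝ := fun i => μ.map (fun ω => -X (i + 1) ω) with hν₂
  haveI : ∀ i, IsProbabilityMeasure (ν₁ i) :=
    fun i => Measure.isProbabilityMeasure_map (hmeas i).aemeasurable
  haveI : ∀ i, IsProbabilityMeasure (ν₂ i) :=
    fun i => Measure.isProbabilityMeasure_map (hmeas (i + 1)).neg.aemeasurable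
  have hmod : ∀ i : Fin (n + 2), ∃ F : ℝ → ℝ → ℝ≥0∞, Measurable (Function.uncurry F) ∧
      (∀ b, Monotone fun a => F a b) ∧ (∀ a, Monotone (F a)) ∧
      ∀ᵐ p ∂((ν₁ i).prod (ν₂ i)), F p.1 p.2 = ENNReal.ofReal (f i p.1 p.2) :=
    fun i => exists_modification (ν₁ i) (ν₂ i) (f i) (hmono1 i) (hmono2 i)
  choose F hFm hF1 hF2 hFae using hmod
  have hpairmeas : ∀ i : Fin (n + 2), Measurable fun ω => (X i ω, -X (i + 1) ω) :=
    fun i => (hmeas i).prodMk (hmeas (i + 1)).neg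
  have hmap : ∀ i : Fin (n + 2),
      μ.map (fun ω => (X i ω, -X (i + 1) ω)) = (ν₁ i).prod (ν₂ i) := by
    intro i
    refine (ProbabilityTheory.indepFun_iff_map_prod_eq_prod_map_map
      (hmeas i).aemeasurable (hmeas (i + 1)).neg.aemeasurable).1 ?_
    exact (hindep.indepFun (hne i)).comp measurable_id measurable_neg
  have hae : ∀ i : Fin (n + 2), ∀ᵐ ω ∂μ,
      F i (X i ω) (-X (i + 1) ω) = ENNReal.ofReal (f i (X i ω) (-X (i + 1) ω)) := by
    intro i
    have h1 : ∀ᵐ p ∂(μ.map (fun ω => (X i ω, -X (i + 1) ω))),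
        F i p.1 p.2 = ENNReal.ofReal (f i p.1 p.2) := by
      rw [hmap i]
      exact hFae i
    exact ae_of_ae_map (hpairmeas i).aemeasurable h1
  set Φ : Fin (n + 2) → ℝ → ℝ → ℝ≥0∞ := fun i a b => F i a (-b) with hΦ
  have hΦm : ∀ i, Measurable (Function.uncurry (Φ i)) := by
    intro i
    have : Function.uncurry (Φ i)
        = (Function.uncurry (F i)) ∘ (fun p : ℝ × ℝ => (p.1, -p.2)) := rfl
    rw [this]
    exact (hFm i).comp (measurable_fst.prodMk measurable_snd.neg)
  have hΦ1 : ∀ i b, Monotone fun a => Φ i a b := fun i b => hF1 i (-b)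
  have hΦ2 : ∀ i a, Antitone (Φ i a) := fun i a b₁ b₂ h => hF2 i a (neg_le_neg h)
  have main := cyclic_measurable μ (n + 2) X hmeas hindep Φ hΦm hΦ1 hΦ2
  have haeall : ∀ᵐ ω ∂μ, ∀ i : Fin (n + 2),
      F i (X i ω) (-X (i + 1) ω) = ENNReal.ofReal (f i (X i ω) (-X (i + 1) ω)) :=
    ae_all_iff.2 hae
  have hLHSeq : ∫⁻ ω, ∏ i, ENNReal.ofReal (f i (X i ω) (-X (i + 1) ω)) ∂μ
      = ∫⁻ ω, ∏ i, Φ i (X i ω) (X (i + 1) ω) ∂μ :=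
    lintegral_congr_ae (haeall.mono fun ω hω =>
      Finset.prod_congr rfl fun i _ => (hω i).symm)
  have hRHSeq : ∀ i : Fin (n + 2), ∫⁻ ω, ENNReal.ofReal (f i (X i ω) (-X (i + 1) ω)) ∂μ
      = ∫⁻ ω, Φ i (X i ω) (X (i + 1) ω) ∂μ :=
    fun i => lintegral_congr_ae ((hae i).mono fun ω hω => hω.symm)
  rw [hLHSeq, Finset.prod_congr rfl fun i (_ : i ∈ Finset.univ) => hRHSeq i]
  exact main
end
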